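/- arXiv:1012.4150 — 5 statements merged into one kernel-verified Lean document; each statement's English description precedes it below -/
import Mathlib

section
/- Let X be a uniformly discrete metric space with bounded geometry and let T ∈ C*(X). Then T is a ghost if and only if its matrix entries vanish at infinity, i.e. for every ε > 0 there exists a bounded set B ⊆ X such that ‖T_{x,y}‖ < ε whenever x ∉ B or y ∉ B. -/
noncomputable section

open scoped ENNReal

/-- ℓ²(Y, H): the Hilbert space of square-summable `H`-valued families indexed by `Y`. -/
abbrev L2 (Y : Type*) (H : Type*) [NormedAddCommGroup H] [InnerProductSpace ℂ H] : Type _ :=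
  lp (fun _ : Y => H) 2

namespace Roe

variable {Y H : Type*} [NormedAddCommGroup H] [InnerProductSpace ℂ H]

set_option maxHeartbeats 1000000 in
/-- The matrix entry `T_{x,y}` of a bounded operator `T` on `ℓ²(Y,H)`: the continuous linear
map on `H` determined by `T_{x,y} v = (T (δ_y ⊗ v)) x`. -/
def entry (T : L2 Y H →L[ℂ] L2 Y H) (x y : Y) : H →L[ℂ] H :=
  letI := Classical.decEq Y
  LinearMap.mkContinuous
    { toFun := fun v => T (lp.single 2 y v) x
      map_add' := by
        intro v w
        show (T (lp.single 2 y (v + w))) x = (T (lp.single 2 y v)) x + (T (lp.single 2 y w)) x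
        have h : lp.single (E := fun _ : Y => H) 2 y (v + w)
            = lp.single 2 y v + lp.single 2 y w := by
          apply lp.ext
          funext j
          by_cases hj : j = y
          · subst hj
            simp only [lp.single_apply_self, lp.coeFn_add, Pi.add_apply]
          · simp only [lp.single_apply_ne _ _ _ hj, lp.coeFn_add, Pi.add_apply, add_zero]
        rw [h, map_add]
        simp only [lp.coeFn_add, Pi.add_apply]
      map_smul' := by
        intro c v
        show (T (lp.single 2 y (c • v))) x = c • (T (lp.single 2 y v)) x
        rw [lp.single_smul, map_smul]
        simp only [lp.coeFn_smul, Pi.smul_apply] }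
    ‖T‖
    (by
      intro v
      show ‖(T (lp.single 2 y v)) x‖ ≤ ‖T‖ * ‖v‖
      have h1 : ‖(T (lp.single 2 y v)) x‖ ≤ ‖T (lp.single 2 y v)‖ :=
        lp.norm_apply_le_norm (by norm_num) _ _
      have h2 : ‖T (lp.single 2 y v)‖ ≤ ‖T‖ * ‖lp.single (E := fun _ : Y => H) 2 y v‖ :=
        T.le_opNorm _
      have h3 : ‖lp.single (E := fun _ : Y => H) 2 y v‖ = ‖v‖ := by
        simpa using lp.norm_single (E := fun _ : Y => H) (p := 2) (by norm_num) (fun _ => v) y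
      calc ‖(T (lp.single 2 y v)) x‖ ≤ ‖T‖ * ‖lp.single (E := fun _ : Y => H) 2 y v‖ :=
            le_trans h1 h2
        _ = ‖T‖ * ‖v‖ := by rw [h3])

/-- `T` has propagation at most `R` with respect to the distance function `d`. -/
def PropagationLE (d : Y → Y → ℝ) (T : L2 Y H →L[ℂ] L2 Y H) (R : ℝ) : Prop :=
  ∀ x y : Y, R < d x y → entry T x y = 0

/-- A set is bounded with respect to the distance function `d`. -/
def DBounded (d : Y → Y → ℝ) (B : Set Y) : Prop :=
  ∃ C : ℝ, ∀ x ∈ B, ∀ y ∈ B, d x y ≤ C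

/-- `T` is locally compact with respect to the distance function `d`: all matrix entries are
compact operators, and over every bounded set only finitely many matrix entries are nonzero. -/
def LocallyCompact (d : Y → Y → ℝ) (T : L2 Y H →L[ℂ] L2 Y H) : Prop :=
  (∀ x y : Y, IsCompactOperator (entry T x y)) ∧
    ∀ B : Set Y, DBounded d B →
      {p : Y × Y | p.1 ∈ B ∧ p.2 ∈ B ∧ entry T p.1 p.2 ≠ 0}.Finite

/-- Membership in the algebraic Roe algebra `ℂ[Y]`: locally compact and finite propagation. -/
def MemRoeAlgebraic (d : Y → Y → ℝ) (T : L2 Y H →L[ℂ] L2 Y H) : Prop :=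
  LocallyCompact d T ∧ ∃ R : ℝ, PropagationLE d T R

/-- The Roe algebra `C*(Y)`: the operator-norm closure of `ℂ[Y]` in `B(ℓ²(Y,H))`. -/
def RoeAlgebra (d : Y → Y → ℝ) : Set (L2 Y H →L[ℂ] L2 Y H) :=
  closure {T | MemRoeAlgebraic d T}

/-- `T` is a ghost operator with respect to the distance function `d`. -/
def IsGhost (d : Y → Y → ℝ) (T : L2 Y H →L[ℂ] L2 Y H) : Prop :=
  ∀ R : ℝ, 0 < R → ∀ ε : ℝ, 0 < ε → ∃ B : Set Y, DBounded d B ∧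
    ∀ ξ : L2 Y H, ‖ξ‖ = 1 →
      (∃ x : Y, x ∉ B ∧ ∀ z : Y, ξ z ≠ 0 → d x z < R) → ‖T ξ‖ < ε

/-- The support of `ξ ∈ ℓ²(Y,H)` has diameter at most `S` for the distance function `d`. -/
def SupportDiamLE (d : Y → Y → ℝ) (ξ : L2 Y H) (S : ℝ) : Prop :=
  ∀ z w : Y, ξ z ≠ 0 → ξ w ≠ 0 → d z w ≤ S

end Roe

/-- `π : X' → X` is a `K`-metric cover: it is surjective, and for every `u` the restriction
of `π` to the open ball of radius `K` about `u` is a distance-preserving bijection onto the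
open ball of radius `K` about `π u`. -/
def IsMetricCover {X' X : Type*} (d' : X' → X' → ℝ) (d : X → X → ℝ)
    (π : X' → X) (K : ℝ) : Prop :=
  Function.Surjective π ∧
    ∀ u : X', Set.BijOn π {w | d' u w < K} {x | d (π u) x < K} ∧
      ∀ w w' : X', d' u w < K → d' u w' < K → d (π w) (π w') = d' w w'

/-- `T'` is the lift of `T` at scale `R` along `π`: its matrix entries are
`T'_{u,v} = T_{π u, π v}` when `d'(u,v) ≤ R` and `0` otherwise. -/
def IsLift {X' X H : Type*} [NormedAddCommGroup H] [InnerProductSpace ℂ H]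
    (π : X' → X) (d' : X' → X' → ℝ)
    (T : L2 X H →L[ℂ] L2 X H) (R : ℝ) (T' : L2 X' H →L[ℂ] L2 X' H) : Prop :=
  ∀ u v : X', (d' u v ≤ R → Roe.entry T' u v = Roe.entry T (π u) (π v)) ∧
    (R < d' u v → Roe.entry T' u v = 0)

/-- `T'` is the lift at scale `S` along `π` of the `n`-th diagonal block `T⁽ⁿ⁾ = PₙTPₙ` of a
bounded operator `T` on `ℓ²(⊔ₙ Vₙ, H)`. -/
def IsBlockLift {V : ℕ → Type*} {W H : Type*} [NormedAddCommGroup H] [InnerProductSpace ℂ H]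
    {n : ℕ} (π : W → V n) (d' : W → W → ℝ)
    (T : L2 (Σ k, V k) H →L[ℂ] L2 (Σ k, V k) H) (S : ℝ)
    (T' : L2 W H →L[ℂ] L2 W H) : Prop :=
  ∀ u v : W, (d' u v ≤ S → Roe.entry T' u v = Roe.entry T ⟨n, π u⟩ ⟨n, π v⟩) ∧
    (S < d' u v → Roe.entry T' u v = 0)

/-- The graph metric of a simple graph, as a real-valued distance function
(shortest path length). -/
def gdist {V : Type*} (G : SimpleGraph V) (u v : V) : ℝ := G.dist u v


section AuxLemmas

variable {Y H : Type*} [NormedAddCommGroup H] [InnerProductSpace ℂ H]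

lemma Roe.norm_entry_le (T : L2 Y H →L[ℂ] L2 Y H) (x y : Y) :
    ‖Roe.entry T x y‖ ≤ ‖T‖ := by
  letI := Classical.decEq Y
  refine ContinuousLinearMap.opNorm_le_bound _ (norm_nonneg T) fun v => ?_
  have h1 : ‖(T (lp.single 2 y v)) x‖ ≤ ‖T (lp.single 2 y v)‖ :=
    lp.norm_apply_le_norm (by norm_num) _ _
  have h2 : ‖T (lp.single 2 y v)‖ ≤ ‖T‖ * ‖lp.single (E := fun _ : Y => H) 2 y v‖ :=
    T.le_opNorm _
  have h3 : ‖lp.single (E := fun _ : Y => H) 2 y v‖ = ‖v‖ := by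
    simpa using lp.norm_single (E := fun _ : Y => H) (p := 2) (by norm_num) (fun _ => v) y
  calc ‖Roe.entry T x y v‖ = ‖(T (lp.single 2 y v)) x‖ := rfl
    _ ≤ ‖T‖ * ‖lp.single (E := fun _ : Y => H) 2 y v‖ := le_trans h1 h2
    _ = ‖T‖ * ‖v‖ := by rw [h3]

lemma Roe.entry_sub (T S : L2 Y H →L[ℂ] L2 Y H) (x y : Y) :
    Roe.entry (T - S) x y = Roe.entry T x y - Roe.entry S x y := by
  letI := Classical.decEq Y
  ext v
  show ((T - S) (lp.single 2 y v)) x = (Roe.entry T x y - Roe.entry S x y) v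
  rw [ContinuousLinearMap.sub_apply, ContinuousLinearMap.sub_apply]
  simp only [lp.coeFn_sub, Pi.sub_apply]
  rfl

lemma L2.apply_eq_sum (T : L2 Y H →L[ℂ] L2 Y H) (ξ : L2 Y H) (F : Finset Y)
    (hF : ∀ z : Y, ξ z ≠ 0 → z ∈ F) (z : Y) :
    (T ξ) z = ∑ w ∈ F, Roe.entry T z w (ξ w) := by
  letI := Classical.decEq Y
  have hdecomp : ∑ w ∈ F, lp.single 2 w (ξ w) = ξ := by
    apply lp.ext
    funext j
    rw [lp.coeFn_sum]
    simp only [Finset.sum_apply]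
    by_cases hj : j ∈ F
    · have hs : ∑ c ∈ F, (lp.single (E := fun _ : Y => H) 2 c (ξ c) : ∀ _ : Y, H) j
          = (lp.single (E := fun _ : Y => H) 2 j (ξ j) : ∀ _ : Y, H) j := by
        refine Finset.sum_eq_single_of_mem j hj ?_
        intro b _ hbj
        exact lp.single_apply_ne 2 b _ (Ne.symm hbj)
      rw [hs, lp.single_apply_self]
    · have hzero : ξ j = 0 := by
        by_contra h
        exact hj (hF j h)
      rw [hzero]
      refine Finset.sum_eq_zero fun b hb => ?_
      rcases eq_or_ne j b with rfl | hne
      · rw [lp.single_apply_self, hzero]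
      · exact lp.single_apply_ne 2 b _ hne
  conv_lhs => rw [← hdecomp]
  rw [map_sum, lp.coeFn_sum]
  simp only [Finset.sum_apply]
  rfl

lemma L2.norm_sq_eq (f : L2 Y H) : ‖f‖ ^ 2 = ∑' z, ‖f z‖ ^ 2 := by
  have h := lp.norm_rpow_eq_tsum (p := 2) (by norm_num) f
  have h2 : ((2 : ℝ≥0∞)).toReal = (2 : ℝ) := by norm_num
  rw [h2] at h
  simpa [Real.rpow_natCast] using h

lemma L2.summable_norm_sq (f : L2 Y H) : Summable fun z => ‖f z‖ ^ 2 := by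
  have h := (lp.memℓp f).summable (p := 2) (by norm_num)
  have h2 : ((2 : ℝ≥0∞)).toReal = (2 : ℝ) := by norm_num
  rw [h2] at h
  simpa [Real.rpow_natCast] using h

end AuxLemmas
section AuxLemmas2

variable {X : Type*} [MetricSpace X]

lemma Roe.dbounded_thicken {B₀ : Set X} (h : Roe.DBounded (fun x y : X => dist x y) B₀)
    (K : ℝ) : Roe.DBounded (fun x y : X => dist x y) {z : X | ∃ b ∈ B₀, dist z b ≤ K} := by
  obtain ⟨C₀, hC₀⟩ := h
  refine ⟨K + C₀ + K, ?_⟩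
  rintro x ⟨b, hb, hxb⟩ y ⟨b', hb', hyb'⟩
  have h1 := hC₀ b hb b' hb'
  have h2 : dist b' y ≤ K := by rw [dist_comm]; exact hyb'
  calc dist x y ≤ dist x b + dist b b' + dist b' y := dist_triangle4 x b b' y
    _ ≤ K + C₀ + K := by linarith

end AuxLemmas2
set_option maxHeartbeats 2000000

/-- for a uniformly discrete bounded geometry space, an element of the Roe
algebra is a ghost if and only if its matrix entries vanish at infinity. -/
theorem ghost_iff_entries_vanish_at_infinity
    (H₀ : Type) [NormedAddCommGroup H₀] [InnerProductSpace ℂ H₀] [CompleteSpace H₀]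
    [TopologicalSpace.SeparableSpace H₀] (hinf : ¬ FiniteDimensional ℂ H₀)
    (X : Type) [MetricSpace X]
    (hud : ∃ δ : ℝ, 0 < δ ∧ ∀ x y : X, x ≠ y → δ ≤ dist x y)
    (hbg : ∀ r : ℝ, ∃ N : ℕ, ∀ x : X, (Metric.ball x r).Finite ∧ (Metric.ball x r).ncard ≤ N)
    (T : L2 X H₀ →L[ℂ] L2 X H₀)
    (hT : T ∈ Roe.RoeAlgebra (fun x y : X => dist x y)) :
    Roe.IsGhost (fun x y : X => dist x y) T ↔
      ∀ ε : ℝ, 0 < ε → ∃ B : Set X, Roe.DBounded (fun x y : X => dist x y) B ∧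
        ∀ x y : X, (x ∉ B ∨ y ∉ B) → ‖Roe.entry T x y‖ < ε := by
  letI := Classical.decEq X
  constructor
  · -- ghost ⇒ entries vanish at infinity
    intro hG ε hε
    have hε2 : 0 < ε / 2 := by positivity
    obtain ⟨S, hSmem, hTS⟩ := Metric.mem_closure_iff.mp hT (ε / 2) hε2
    rw [dist_eq_norm] at hTS
    obtain ⟨-, R₀, hR₀⟩ := hSmem
    obtain ⟨B₀, hB₀bdd, hB₀⟩ := hG 1 one_pos (ε / 2) hε2
    set K : ℝ := max R₀ 0 with hK
    have hK0 : (0 : ℝ) ≤ K := le_max_right _ _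
    refine ⟨{z : X | ∃ b ∈ B₀, dist z b ≤ K}, Roe.dbounded_thicken hB₀bdd K, ?_⟩
    have hBsub : B₀ ⊆ {z : X | ∃ b ∈ B₀, dist z b ≤ K} := by
      intro b hb
      exact ⟨b, hb, by simpa [dist_self] using hK0⟩
    -- column estimate
    have hcol : ∀ x y : X, y ∉ B₀ → ‖Roe.entry T x y‖ ≤ ε / 2 := by
      intro x y hy
      refine ContinuousLinearMap.opNorm_le_bound _ (le_of_lt hε2) fun v => ?_
      rcases eq_or_ne v 0 with rfl | hv
      · simp
      · have hvne : ((‖v‖ : ℂ)) ≠ 0 := by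
          exact_mod_cast norm_ne_zero_iff.mpr hv
        set u : H₀ := ((‖v‖ : ℂ))⁻¹ • v with hu
        have hun : ‖u‖ = 1 := norm_smul_inv_norm hv
        set ξ : L2 X H₀ := lp.single 2 y u with hξ
        have hξn : ‖ξ‖ = 1 := by
          have := lp.norm_single (E := fun _ : X => H₀) (p := 2) (by norm_num)
            y u
          simpa [hξ, hun] using this
        have hTξ : ‖T ξ‖ < ε / 2 := by
          refine hB₀ ξ hξn ⟨y, hy, ?_⟩
          intro z hz
          have hzy : z = y := by
            by_contra hne
            refine hz ?_
            have h0 : (lp.single (E := fun _ : X => H₀) 2 y u : ∀ _ : X, H₀) z = 0 :=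
              lp.single_apply_ne (E := fun _ : X => H₀) 2 y u hne
            simpa [hξ] using h0
          subst hzy
          simpa [dist_self] using one_pos
        have hvu : v = ((‖v‖ : ℂ)) • u := by
          rw [hu, smul_inv_smul₀ hvne]
        have hnorm_eq : ‖Roe.entry T x y v‖ = ‖v‖ * ‖Roe.entry T x y u‖ := by
          conv_lhs => rw [hvu]
          rw [map_smul, norm_smul, Complex.norm_real, Real.norm_eq_abs,
            abs_of_nonneg (norm_nonneg v)]
        have hEu : ‖Roe.entry T x y u‖ ≤ ‖T ξ‖ := by
          have heq : Roe.entry T x y u = (T ξ) x := rfl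
          rw [heq]
          exact lp.norm_apply_le_norm (by norm_num) _ _
        calc ‖Roe.entry T x y v‖ = ‖v‖ * ‖Roe.entry T x y u‖ := hnorm_eq
          _ ≤ ‖v‖ * (ε / 2) := by
              refine mul_le_mul_of_nonneg_left ?_ (norm_nonneg v)
              exact le_trans hEu (le_of_lt hTξ)
          _ = ε / 2 * ‖v‖ := mul_comm _ _
    intro x y hxy
    by_cases hy : y ∈ B₀
    · rcases hxy with hx | hyB
      · have hdist : K < dist x y := by
          by_contra h
          push_neg at h
          exact hx ⟨y, hy, h⟩
        have hSxy : Roe.entry S x y = 0 :=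
          hR₀ x y (lt_of_le_of_lt (le_max_left R₀ 0) hdist)
        have hTxy : Roe.entry T x y = Roe.entry (T - S) x y := by
          rw [Roe.entry_sub, hSxy, sub_zero]
        calc ‖Roe.entry T x y‖ = ‖Roe.entry (T - S) x y‖ := by rw [hTxy]
          _ ≤ ‖T - S‖ := Roe.norm_entry_le _ _ _
          _ < ε / 2 := hTS
          _ < ε := by linarith
      · exact absurd (hBsub hy) hyB
    · exact lt_of_le_of_lt (hcol x y hy) (by linarith)
  · -- entries vanish at infinity ⇒ ghost
    intro hvan R hR ε hε
    have hε2 : 0 < ε / 2 := by positivity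
    obtain ⟨S, hSmem, hTS⟩ := Metric.mem_closure_iff.mp hT (ε / 2) hε2
    rw [dist_eq_norm] at hTS
    obtain ⟨-, P, hP⟩ := hSmem
    set P' : ℝ := max P 0 with hP'
    have hP'0 : (0 : ℝ) ≤ P' := le_max_right _ _
    have hPP' : P ≤ P' := le_max_left _ _
    obtain ⟨N, hN⟩ := hbg (R + P' + 1)
    set K : ℝ := (N : ℝ) + 1 with hKdef
    have hK1 : (1 : ℝ) ≤ K := by
      have : (0 : ℝ) ≤ (N : ℝ) := Nat.cast_nonneg N
      simp only [hKdef]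
      linarith
    have hK0 : (0 : ℝ) < K := lt_of_lt_of_le one_pos hK1
    set η : ℝ := ε / (2 * K ^ 2) with hηdef
    have hηpos : 0 < η := by positivity
    obtain ⟨B₀, hB₀bdd, hB₀⟩ := hvan η hηpos
    refine ⟨{z : X | ∃ b ∈ B₀, dist z b ≤ R + P' + 1},
      Roe.dbounded_thicken hB₀bdd _, ?_⟩
    rintro ξ hξn ⟨x, hxB, hsupp⟩
    -- the support of ξ is contained in the finite ball around x
    have hsub : {w : X | ξ w ≠ 0} ⊆ Metric.ball x (R + P' + 1) := by
      intro w hw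
      have h1 := hsupp w hw
      rw [Metric.mem_ball, dist_comm]
      linarith
    have hFfin : {w : X | ξ w ≠ 0}.Finite := (hN x).1.subset hsub
    set F : Finset X := hFfin.toFinset with hFdef
    have hF : ∀ z : X, ξ z ≠ 0 → z ∈ F := fun z hz => hFfin.mem_toFinset.mpr hz
    have hFcard : (F.card : ℝ) ≤ N := by
      have h1 : {w : X | ξ w ≠ 0}.ncard ≤ (Metric.ball x (R + P' + 1)).ncard :=
        Set.ncard_le_ncard hsub (hN x).1
      have h2 : F.card = {w : X | ξ w ≠ 0}.ncard :=
        (Set.ncard_eq_toFinset_card _ hFfin).symm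
      have h3 : F.card ≤ N := by
        rw [h2]
        exact le_trans h1 (hN x).2
      exact_mod_cast h3
    have hwB₀ : ∀ w : X, ξ w ≠ 0 → w ∉ B₀ := by
      intro w hw hwB
      refine hxB ⟨w, hwB, ?_⟩
      have := hsupp w hw
      linarith
    -- pointwise bound over all rows
    have hbound : ∀ z : X, ‖(T ξ) z‖ ≤ η * K := by
      intro z
      rw [L2.apply_eq_sum T ξ F hF z]
      have hterm : ∀ w ∈ F, ‖Roe.entry T z w (ξ w)‖ ≤ η := by
        intro w hw
        have hw0 : ξ w ≠ 0 := hFfin.mem_toFinset.mp hw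
        have hη' : ‖Roe.entry T z w‖ < η := hB₀ z w (Or.inr (hwB₀ w hw0))
        have hxiw : ‖ξ w‖ ≤ 1 := hξn ▸ lp.norm_apply_le_norm (by norm_num) ξ w
        calc ‖Roe.entry T z w (ξ w)‖ ≤ ‖Roe.entry T z w‖ * ‖ξ w‖ :=
              ContinuousLinearMap.le_opNorm _ _
          _ ≤ η * 1 :=
              mul_le_mul (le_of_lt hη') hxiw (norm_nonneg _) (le_of_lt hηpos)
          _ = η := mul_one η
      calc ‖∑ w ∈ F, Roe.entry T z w (ξ w)‖ ≤ ∑ w ∈ F, ‖Roe.entry T z w (ξ w)‖ :=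
            norm_sum_le _ _
        _ ≤ ∑ _w ∈ F, η := Finset.sum_le_sum hterm
        _ = (F.card : ℝ) * η := by rw [Finset.sum_const, nsmul_eq_mul]
        _ ≤ K * η := by
            refine mul_le_mul_of_nonneg_right ?_ (le_of_lt hηpos)
            calc (F.card : ℝ) ≤ N := hFcard
              _ ≤ K := by simp [hKdef]
        _ = η * K := mul_comm _ _
    -- ball as a Finset, tail identity
    set G : Finset X := (hN x).1.toFinset with hGdef
    have hGcard : (G.card : ℝ) ≤ N := by
      have h2 : G.card = (Metric.ball x (R + P' + 1)).ncard :=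
        (Set.ncard_eq_toFinset_card _ (hN x).1).symm
      have h3 : G.card ≤ N := by rw [h2]; exact (hN x).2
      exact_mod_cast h3
    have htail : ∀ z : X, z ∉ G → (T ξ) z = ((T - S) ξ) z := by
      intro z hz
      have hzball : ¬ dist z x < R + P' + 1 := by
        intro h
        exact hz ((hN x).1.mem_toFinset.mpr (Metric.mem_ball.mpr h))
      push_neg at hzball
      have hSz : (S ξ) z = 0 := by
        rw [L2.apply_eq_sum S ξ F hF z]
        refine Finset.sum_eq_zero fun w hw => ?_
        have hw0 : ξ w ≠ 0 := hFfin.mem_toFinset.mp hw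
        have h1 : dist x w < R := hsupp w hw0
        have h2 : P < dist z w := by
          have h3 : dist z x ≤ dist z w + dist w x := dist_triangle z w x
          have h4 : dist w x = dist x w := dist_comm w x
          linarith
        rw [hP z w h2]
        simp
      have hsub' : ((T - S) ξ) z = (T ξ) z - (S ξ) z := by
        rw [ContinuousLinearMap.sub_apply]
        simp [lp.coeFn_sub]
      rw [hsub', hSz, sub_zero]
    have hTSξ : ‖(T - S) ξ‖ < ε / 2 := by
      calc ‖(T - S) ξ‖ ≤ ‖T - S‖ * ‖ξ‖ := ContinuousLinearMap.le_opNorm _ _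
        _ = ‖T - S‖ := by rw [hξn, mul_one]
        _ < ε / 2 := hTS
    -- square norm estimate
    have hsq : ‖T ξ‖ ^ 2 < ε ^ 2 := by
      have hsplit : (∑ z ∈ G, ‖(T ξ) z‖ ^ 2)
          + (∑' z : {z : X // z ∉ G}, ‖(T ξ) (z : X)‖ ^ 2)
          = ∑' z : X, ‖(T ξ) z‖ ^ 2 :=
        Summable.sum_add_tsum_subtype_compl (L2.summable_norm_sq (T ξ)) G
      rw [L2.norm_sq_eq, ← hsplit]
      have h1 : ∑ z ∈ G, ‖(T ξ) z‖ ^ 2 ≤ K * (η * K) ^ 2 := by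
        have hb : ∀ z ∈ G, ‖(T ξ) z‖ ^ 2 ≤ (η * K) ^ 2 := fun z _ =>
          pow_le_pow_left₀ (norm_nonneg _) (hbound z) 2
        calc ∑ z ∈ G, ‖(T ξ) z‖ ^ 2 ≤ G.card • ((η * K) ^ 2) :=
              Finset.sum_le_card_nsmul _ _ _ hb
          _ = (G.card : ℝ) * (η * K) ^ 2 := nsmul_eq_mul _ _
          _ ≤ K * (η * K) ^ 2 := by
              refine mul_le_mul_of_nonneg_right ?_ (by positivity)
              calc (G.card : ℝ) ≤ N := hGcard
                _ ≤ K := by simp [hKdef]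
      have h2 : (∑' z : {z : X // z ∉ G}, ‖(T ξ) (z : X)‖ ^ 2) < (ε / 2) ^ 2 := by
        have heq : ∀ z : {z : X // z ∉ G}, ‖(T ξ) (z : X)‖ ^ 2
            = ‖((T - S) ξ) (z : X)‖ ^ 2 := fun z => by rw [htail _ z.2]
        rw [tsum_congr heq]
        have hle : (∑' z : {z : X // z ∉ G}, ‖((T - S) ξ) (z : X)‖ ^ 2)
            ≤ ∑' z : X, ‖((T - S) ξ) z‖ ^ 2 := by
          refine Summable.tsum_le_tsum_of_inj (Subtype.val) Subtype.val_injective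
            (fun c _ => by positivity) (fun z => le_refl _)
            ((L2.summable_norm_sq ((T - S) ξ)).subtype _)
            (L2.summable_norm_sq ((T - S) ξ))
        have heq2 : (∑' z : X, ‖((T - S) ξ) z‖ ^ 2) = ‖(T - S) ξ‖ ^ 2 :=
          (L2.norm_sq_eq _).symm
        calc (∑' z : {z : X // z ∉ G}, ‖((T - S) ξ) (z : X)‖ ^ 2)
            ≤ ‖(T - S) ξ‖ ^ 2 := heq2 ▸ hle
          _ < (ε / 2) ^ 2 := by
              refine pow_lt_pow_left₀ hTSξ (norm_nonneg _) (by norm_num)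
      -- numeric conclusion
      have hηK : η * K = ε / (2 * K) := by
        rw [hηdef]
        field_simp
      have hpos : 0 < ε ^ 2 := by positivity
      have hmain : K * (η * K) ^ 2 ≤ ε ^ 2 / 4 := by
        have hKne : K ≠ 0 := ne_of_gt hK0
        have heq3 : K * (η * K) ^ 2 = ε ^ 2 / (4 * K) := by
          rw [hηK]
          field_simp
          ring
        rw [heq3, div_le_div_iff₀ (by positivity) (by norm_num : (0:ℝ) < 4)]
        nlinarith [hpos, hK1]
      have hA : ∑ z ∈ G, ‖(T ξ) z‖ ^ 2 ≤ ε ^ 2 / 4 := le_trans h1 hmain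
      have hB : (∑' z : {z : X // z ∉ G}, ‖(T ξ) (z : X)‖ ^ 2) < ε ^ 2 / 4 := by
        have hε2sq : (ε / 2) ^ 2 = ε ^ 2 / 4 := by ring
        rw [← hε2sq]
        exact h2
      have hsum : ∑ z ∈ G, ‖(T ξ) z‖ ^ 2
          + (∑' z : {z : X // z ∉ G}, ‖(T ξ) (z : X)‖ ^ 2) < ε ^ 2 / 4 + ε ^ 2 / 4 :=
        add_lt_add_of_le_of_lt hA hB
      have hfin : ε ^ 2 / 4 + ε ^ 2 / 4 < ε ^ 2 := by linarith
      exact lt_trans hsum hfin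
    exact lt_of_pow_lt_pow_left₀ 2 (le_of_lt hε) hsq

end
end

section
/- Let G be a connected simple graph, let T be a connected acyclic simple graph (a tree), and let π : T → G be a graph covering map, that is, a graph homomorphism which maps the neighbours of each vertex v of T bijectively onto the neighbours of π(v). Let R be a natural number and suppose girth(G) > 4R. Then for every vertex v of T, π restricts to a bijection from the closed ball {u ∈ V(T) : d_T(u,v) ≤ R} onto the closed ball {x ∈ V(G) : d_G(x,π(v)) ≤ R}, and d_G(π(u),π(w)) = d_T(u,w) for all u,w in this ball. (Consequently, the universal covering maps of a sequence of finite connected graphs whose girths tend to infinity form an asymptotically faithful covering sequence.) -/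
noncomputable section

open scoped ENNReal

section CoverAux

open SimpleGraph

private lemma egirth_le_of_cycle {α : Type} {G : SimpleGraph α} {a : α} {w : G.Walk a a}
    (hw : w.IsCycle) : G.egirth ≤ w.length := by
  calc G.egirth ≤ ⨅ w : G.Walk a a, ⨅ _ : w.IsCycle, (w.length : ℕ∞) := iInf_le _ a
    _ ≤ ⨅ _ : w.IsCycle, (w.length : ℕ∞) := iInf_le _ w
    _ ≤ w.length := iInf_le _ hw

private lemma dist_le_of_mem_support {V : Type} {G : SimpleGraph V} {u v x y : V}
    (p : G.Walk u v) (hx : x ∈ p.support) (hy : y ∈ p.support) :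
    G.dist x y ≤ p.length := by
  classical
  have hspec := p.take_spec hx
  have hylem : y ∈ (p.takeUntil x hx).support ∨ y ∈ (p.dropUntil x hx).support := by
    rw [← SimpleGraph.Walk.mem_support_append_iff, hspec]; exact hy
  have hlen : (p.takeUntil x hx).length + (p.dropUntil x hx).length = p.length := by
    rw [← SimpleGraph.Walk.length_append, hspec]
  rcases hylem with hy' | hy'
  · have h1 := SimpleGraph.dist_le ((p.takeUntil x hx).dropUntil y hy')
    have h2 := SimpleGraph.Walk.length_dropUntil_le (p.takeUntil x hx) hy'
    rw [SimpleGraph.dist_comm]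
    omega
  · have h1 := SimpleGraph.dist_le ((p.dropUntil x hx).takeUntil y hy')
    have h2 := SimpleGraph.Walk.length_takeUntil_le (p.dropUntil x hx) hy'
    omega

private lemma dist_lt_of_mem_support_ne {V : Type} {G : SimpleGraph V} {u v z : V}
    (p : G.Walk u v) (hz : z ∈ p.support) (hzv : z ≠ v) :
    G.dist u z < p.length := by
  classical
  have h1 := SimpleGraph.dist_le (p.takeUntil z hz)
  have hlen : (p.takeUntil z hz).length + (p.dropUntil z hz).length = p.length := by
    rw [← SimpleGraph.Walk.length_append, p.take_spec hz]
  have h2 : (p.dropUntil z hz).length ≠ 0 := fun h0 =>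
    hzv (SimpleGraph.Walk.eq_of_length_eq_zero h0)
  omega

private lemma lift_walk {VG VT : Type} {G : SimpleGraph VG} {T : SimpleGraph VT}
    (π : VT → VG)
    (hloc : ∀ v : VT, Set.BijOn π (T.neighborSet v) (G.neighborSet (π v))) :
    ∀ {x y : VG} (p : G.Walk x y) (u : VT), π u = x →
      ∃ (u' : VT) (q : T.Walk u u'), π u' = y ∧ q.length = p.length ∧
        q.support.map π = p.support := by
  intro x y p
  induction p with
  | nil =>
    intro u hu
    exact ⟨u, SimpleGraph.Walk.nil, hu, rfl, by simp [hu]⟩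
  | @cons x z y h p ih =>
    intro u hu
    have hz : z ∈ G.neighborSet (π u) := by rw [hu]; exact h
    obtain ⟨u₁, hu₁T, hu₁⟩ := (hloc u).2.2 hz
    obtain ⟨u', q, h1, h2, h3⟩ := ih u₁ hu₁
    exact ⟨u', SimpleGraph.Walk.cons (show T.Adj u u₁ from hu₁T) q, h1, by simp [h2], by simp [hu, h3]⟩

private lemma tree_path_length {VT : Type} {T : SimpleGraph VT} (hT : T.IsTree)
    {u v : VT} (q : T.Walk u v) (hq : q.IsPath) : q.length = T.dist u v := by
  obtain ⟨p, hp, hlen⟩ := hT.isConnected.exists_path_of_dist u v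
  have : (⟨q, hq⟩ : T.Path u v) = ⟨p, hp⟩ := hT.IsAcyclic.path_unique _ _
  have hqp : q = p := congrArg Subtype.val this
  rw [hqp, hlen]

private lemma cover_inj_of_dist_le {VG VT : Type} {G : SimpleGraph VG} {T : SimpleGraph VT}
    (hT : T.IsTree) (π : VT → VG)
    (hhom : ∀ u v : VT, T.Adj u v → G.Adj (π u) (π v))
    (hloc : ∀ v : VT, Set.BijOn π (T.neighborSet v) (G.neighborSet (π v)))
    (R : ℕ) (hg : (4 * R : ℕ∞) < G.egirth) :
    ∀ a b : VT, π a = π b → T.dist a b ≤ 4 * R → a = b := by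
  have hgn : ∀ n : ℕ, n ≤ 4 * R → (n : ℕ∞) < G.egirth := by
    intro n hn
    refine lt_of_le_of_lt ?_ hg
    exact_mod_cast Nat.cast_le.mpr hn
  suffices H : ∀ ℓ : ℕ, ∀ a b : VT, T.dist a b = ℓ → π a = π b → ℓ ≤ 4 * R → a = b by
    intro a b h1 h2; exact H _ a b rfl h1 h2
  intro ℓ
  induction ℓ using Nat.strong_induction_on with
  | _ ℓ IH =>
    intro a b hd hπ hR
    rcases Nat.lt_or_ge ℓ 2 with hℓ2 | hℓ2
    · -- ℓ = 0 or 1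
      interval_cases ℓ
      · exact hT.isConnected.dist_eq_zero_iff.mp hd
      · exfalso
        have hadj : T.Adj a b := SimpleGraph.dist_eq_one_iff_adj.mp hd
        have := hhom a b hadj
        rw [hπ] at this
        exact G.irrefl this
    · obtain ⟨p, hp, hlen⟩ := hT.isConnected.exists_path_of_dist a b
      rw [hd] at hlen
      cases p with
      | nil => simp at hlen; omega
      | @cons _ a₁ _ h p' =>
        rw [SimpleGraph.Walk.cons_isPath_iff] at hp
        obtain ⟨hp', hanotin⟩ := hp
        have hlen' : p'.length = ℓ - 1 := by
          simp [SimpleGraph.Walk.length_cons] at hlen; omega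
        -- destructure reverse of p' to get the penultimate vertex b₁
        obtain ⟨b₁, hb, r, hpr⟩ : ∃ (b₁ : VT) (hb : T.Adj b b₁) (r : T.Walk b₁ a₁),
            p'.reverse = SimpleGraph.Walk.cons hb r := by
          cases hrev : p'.reverse with
          | nil =>
            exfalso
            have := congrArg SimpleGraph.Walk.length hrev
            rw [SimpleGraph.Walk.length_reverse] at this
            simp only [SimpleGraph.Walk.length_nil] at this
            omega
          | @cons _ c _ hb r => exact ⟨c, hb, r, rfl⟩
        have hrlen : r.length = ℓ - 2 := by
          have := congrArg SimpleGraph.Walk.length hpr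
          rw [SimpleGraph.Walk.length_reverse] at this
          simp [SimpleGraph.Walk.length_cons] at this; omega
        by_cases hcase : π a₁ = π b₁
        · -- first subcase: a₁ = b₁ by induction, then use local injectivity at a₁
          have hd₁ : T.dist a₁ b₁ ≤ ℓ - 2 := by
            have := SimpleGraph.dist_le r.reverse
            rw [SimpleGraph.Walk.length_reverse, hrlen] at this
            exact this
          have hab₁ : a₁ = b₁ := by
            refine IH (T.dist a₁ b₁) (by omega) a₁ b₁ rfl hcase (by omega)
          have haN : a ∈ T.neighborSet a₁ := h.symm
          have hbN : b ∈ T.neighborSet a₁ := by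
            rw [hab₁]; exact hb.symm
          exact (hloc a₁).2.1 haN hbN hπ
        · -- second subcase: build a cycle in G of length ℓ
          exfalso
          have hℓ3 : 3 ≤ ℓ := by
            rcases Nat.lt_or_ge ℓ 3 with h3 | h3
            · exfalso
              have : r.length = 0 := by omega
              have := SimpleGraph.Walk.eq_of_length_eq_zero this
              exact hcase (by rw [this])
            · exact h3
          set f : T →g G := ⟨π, fun {u v} huv => hhom u v huv⟩ with hf
          have hfval : ∀ z : VT, f z = π z := fun _ => rfl
          -- π is injective on p'.support
          have hinj : ∀ x ∈ p'.support, ∀ y ∈ p'.support, π x = π y → x = y := by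
            intro x hxs y hys hxy
            by_cases hxy' : x = y
            · exact hxy'
            · have hdxy := dist_le_of_mem_support p' hxs hys
              exact IH (T.dist x y) (by omega) x y rfl hxy (by omega)
          have hpath : (p'.map f).IsPath := by
            rw [SimpleGraph.Walk.isPath_def, SimpleGraph.Walk.support_map]
            exact (SimpleGraph.Walk.isPath_def _ |>.mp hp').map_on hinj
          -- the edge s(π a, π a₁) is not in (p'.map f).edges
          have hedge : s(π a, π a₁) ∉ (p'.map f).edges := by
            intro hmem
            rw [SimpleGraph.Walk.edges_map, List.mem_map] at hmem
            obtain ⟨e, he, heq⟩ := hmem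
            induction e using Sym2.ind with
            | _ x y =>
              rw [Sym2.map_pair_eq, Sym2.eq_iff] at heq
              -- helper facts
              have key : ∀ z z' : VT, s(z, z') = s(x, y) → π z = π a → π z' = π a₁ → False := by
                intro z z' hzz' hza hza₁
                have hzs : z ∈ p'.support := by
                  have : s(z, z') ∈ p'.edges := by rw [hzz']; exact he
                  exact SimpleGraph.Walk.fst_mem_support_of_mem_edges p' this
                have hz's : z' ∈ p'.support := by
                  have : s(z, z') ∈ p'.edges := by rw [hzz']; exact he
                  exact SimpleGraph.Walk.snd_mem_support_of_mem_edges p' this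
                have hzps : z ∈ (SimpleGraph.Walk.cons h p').support := by
                  rw [SimpleGraph.Walk.support_cons]; exact List.mem_cons_of_mem _ hzs
                by_cases hzb : z = b
                · -- then z' must equal a₁ by induction, giving a short cycle
                  by_cases hz'a₁ : z' = a₁
                  · -- T.Adj b a₁, so dist a b ≤ 2 < 3 ≤ ℓ
                    have hadj : T.Adj z z' := p'.adj_of_mem_edges (by rw [hzz']; exact he)
                    rw [hzb, hz'a₁] at hadj
                    have h1 : T.dist a a₁ = 1 := SimpleGraph.dist_eq_one_iff_adj.mpr h
                    have h2 : T.dist a₁ b = 1 := SimpleGraph.dist_eq_one_iff_adj.mpr hadj.symm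
                    have h3 := hT.isConnected.dist_triangle (u := a) (v := a₁) (w := b)
                    omega
                  · have hdz := dist_le_of_mem_support p' hz's
                      (SimpleGraph.Walk.start_mem_support p')
                    exact hz'a₁ (IH (T.dist z' a₁) (by omega) z' a₁ rfl hza₁ (by omega))
                · -- z ≠ b: then π z = π a with dist a z < ℓ forces a = z ∈ p'.support
                  have hdz := dist_lt_of_mem_support_ne (SimpleGraph.Walk.cons h p') hzps hzb
                  have hlc : (SimpleGraph.Walk.cons h p').length = ℓ := hlen
                  have haz : a = z :=
                    IH (T.dist a z) (by omega) a z rfl hza.symm (by omega)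
                  exact hanotin (haz ▸ hzs)
              rcases heq with ⟨h1, h2⟩ | ⟨h1, h2⟩
              · exact key x y rfl h1 h2
              · exact key y x (Sym2.eq_swap) h2 h1
          -- assemble the cycle
          have hcyc : (SimpleGraph.Walk.cons (hhom a a₁ h)
              ((p'.map f).copy rfl hπ.symm)).IsCycle := by
            rw [SimpleGraph.Walk.cons_isCycle_iff]
            constructor
            · exact (SimpleGraph.Walk.isPath_copy _ _ _).mpr hpath
            · rw [SimpleGraph.Walk.edges_copy]
              exact hedge
          have hle := egirth_le_of_cycle hcyc
          have hclen : (SimpleGraph.Walk.cons (hhom a a₁ h)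
              ((p'.map f).copy rfl hπ.symm)).length = ℓ := by
            simp [SimpleGraph.Walk.length_cons, SimpleGraph.Walk.length_copy,
              SimpleGraph.Walk.length_map, hlen']
            omega
          rw [hclen] at hle
          exact absurd (lt_of_le_of_lt hle (hgn ℓ hR)) (lt_irrefl _)

end CoverAux

/-- a covering map from a tree to a connected graph of girth greater than `4R`
restricts to a distance-preserving bijection on closed balls of radius `R`. -/
theorem covering_map_isometric_on_balls_of_large_girth
    (VG VT : Type) (G : SimpleGraph VG) (T : SimpleGraph VT)
    (hG : G.Connected) (hT : T.IsTree)
    (π : VT → VG)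
    (hhom : ∀ u v : VT, T.Adj u v → G.Adj (π u) (π v))
    (hloc : ∀ v : VT, Set.BijOn π (T.neighborSet v) (G.neighborSet (π v)))
    (R : ℕ) (hg : (4 * R : ℕ∞) < G.egirth) :
    ∀ v : VT,
      Set.BijOn π {u : VT | T.dist u v ≤ R} {x : VG | G.dist x (π v) ≤ R} ∧
      ∀ u w : VT, T.dist u v ≤ R → T.dist w v ≤ R →
        G.dist (π u) (π w) = T.dist u w := by
  intro v
  have hinj4 := cover_inj_of_dist_le hT π hhom hloc R hg
  set f : T →g G := ⟨π, fun {u w} h => hhom u w h⟩ with hf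
  -- (A) π does not increase distances
  have hdle : ∀ u w : VT, G.dist (π u) (π w) ≤ T.dist u w := by
    intro u w
    obtain ⟨p, hp, hlen⟩ := hT.isConnected.exists_path_of_dist u w
    have := SimpleGraph.dist_le (p.map f)
    rw [SimpleGraph.Walk.length_map, hlen] at this
    exact this
  -- (B) π preserves distances at scale ≤ 2R
  have hdeq : ∀ u w : VT, T.dist u w ≤ 2 * R → G.dist (π u) (π w) = T.dist u w := by
    intro u w h2R
    have hle := hdle u w
    obtain ⟨p, hp, hlen⟩ := (hG (π u) (π w)).exists_path_of_dist
    obtain ⟨u', q, hπu', hqlen, hqsupp⟩ := lift_walk π hloc p u rfl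
    have hq : q.IsPath := by
      rw [SimpleGraph.Walk.isPath_def]
      exact List.Nodup.of_map π (hqsupp ▸ hp.support_nodup)
    have hql : q.length = T.dist u u' := tree_path_length hT q hq
    have hduu' : T.dist u u' = G.dist (π u) (π w) := by omega
    have htri := hT.isConnected.dist_triangle (u := u') (v := u) (w := w)
    have hcomm : T.dist u' u = T.dist u u' := SimpleGraph.dist_comm ..
    have hu'w : u' = w := by
      refine hinj4 u' w (by rw [hπu']) (by omega)
    rw [hu'w] at hduu'
    omega
  refine ⟨⟨?_, ?_, ?_⟩, ?_⟩
  · -- MapsTo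
    intro u hu
    simp only [Set.mem_setOf_eq] at hu ⊢
    exact le_trans (hdle u v) hu
  · -- InjOn
    intro u hu w hw hπuw
    simp only [Set.mem_setOf_eq] at hu hw
    have htri := hT.isConnected.dist_triangle (u := u) (v := v) (w := w)
    have hc : T.dist v w = T.dist w v := SimpleGraph.dist_comm ..
    exact hinj4 u w hπuw (by omega)
  · -- SurjOn
    intro x hx
    simp only [Set.mem_setOf_eq] at hx
    obtain ⟨p, hp, hlen⟩ := (hG (π v) x).exists_path_of_dist
    obtain ⟨u', q, hπu', hqlen, _⟩ := lift_walk π hloc p v rfl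
    refine ⟨u', ?_, hπu'⟩
    simp only [Set.mem_setOf_eq]
    have h1 : T.dist v u' ≤ q.length := SimpleGraph.dist_le q
    have h2 : T.dist u' v = T.dist v u' := SimpleGraph.dist_comm ..
    have h3 : G.dist (π v) x = G.dist x (π v) := SimpleGraph.dist_comm ..
    omega
  · -- distances preserved on the ball
    intro u w hu hw
    have htri := hT.isConnected.dist_triangle (u := u) (v := v) (w := w)
    have hc : T.dist v w = T.dist w v := SimpleGraph.dist_comm ..
    exact hdeq u w (by omega)

end
end

section
/- Let π : X̃ → X be a surjection of uniformly discrete metric spaces which is a K-metric cover, let R, S > 0 satisfy S + R + 1 ≤ K, let T be a bounded operator on ℓ²(X,H₀) of propagation at most R whose lift T̃ at scale R is a bounded operator on ℓ²(X̃,H₀), and let ξ̃ ∈ ℓ²(X̃,H₀) be supported in the closed ball {w : d(w,u) ≤ S} for some u ∈ X̃. Define ξ ∈ ℓ²(X,H₀) by ξ(π(w)) = ξ̃(w) for w with d(w,u) ≤ S and ξ(x) = 0 for x outside the image of this ball (well defined since π is injective on the ball). Then ‖ξ‖ = ‖ξ̃‖ and ‖Tξ‖ = ‖T̃ξ̃‖.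 -/
noncomputable section

open scoped ENNReal

section Aux

variable {Y H : Type*} [NormedAddCommGroup H] [InnerProductSpace ℂ H]

/-- Evaluation at a point as a continuous linear map on `ℓ²(Y,H)`. -/
def evalCLM (x : Y) : L2 Y H →L[ℂ] H :=
  LinearMap.mkContinuous
    { toFun := fun f => f x
      map_add' := fun f g => by simp [lp.coeFn_add]
      map_smul' := fun c f => by simp [lp.coeFn_smul] }
    1
    (fun f => by
      show ‖f x‖ ≤ 1 * ‖f‖
      simpa using lp.norm_apply_le_norm (p := 2) (by norm_num) f x)

theorem entry_apply (T : L2 Y H →L[ℂ] L2 Y H) (x y : Y) (v : H) :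
    Roe.entry T x y v = letI := Classical.decEq Y; T (lp.single 2 y v) x := rfl

theorem hasSum_entry_apply (T : L2 Y H →L[ℂ] L2 Y H) (ξ : L2 Y H) (x : Y) :
    HasSum (fun y => Roe.entry T x y (ξ y)) ((T ξ) x) := by
  letI := Classical.decEq Y
  haveI : Fact ((1 : ℝ≥0∞) ≤ 2) := ⟨one_le_two⟩
  have h : HasSum (fun y : Y => lp.single 2 y (ξ y)) ξ :=
    lp.hasSum_single (by norm_num) ξ
  have h2 := (h.mapL T).mapL (evalCLM (H := H) x)
  convert h2 using 2
  all_goals rfl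

/-- Transfer of ℓ² norms along a partially defined injection matching the supports. -/
theorem norm_transfer {X' X : Type*} (π : X' → X) (A : Set X')
    (hinj : Set.InjOn π A)
    (η' : L2 X' H) (η : L2 X H)
    (h0 : ∀ w : X', η' w ≠ 0 → w ∈ A)
    (h1 : ∀ w ∈ A, η (π w) = η' w)
    (h2 : ∀ x : X, η x ≠ 0 → ∃ w ∈ A, π w = x) :
    ‖η‖ = ‖η'‖ := by
  have hp : 0 < (2 : ℝ≥0∞).toReal := by norm_num
  have key : ∑' x : X, ‖η x‖ ^ (2 : ℝ≥0∞).toReal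
      = ∑' w : X', ‖η' w‖ ^ (2 : ℝ≥0∞).toReal := by
    apply tsum_eq_tsum_of_ne_zero_bij
      (fun w : Function.support (fun w : X' => ‖η' w‖ ^ (2 : ℝ≥0∞).toReal) => π w.1)
    · rintro ⟨w, hw⟩ ⟨w', hw'⟩ h
      have hw0 : η' w ≠ 0 := by
        intro h0'
        apply hw
        simp [Function.mem_support.mp, h0', Real.zero_rpow hp.ne']
      have hw0' : η' w' ≠ 0 := by
        intro h0'
        apply hw'
        simp [h0', Real.zero_rpow hp.ne']
      exact Subtype.ext (hinj (h0 _ hw0) (h0 _ hw0') h)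
    · intro x hx
      have hx0 : η x ≠ 0 := by
        intro h0'
        apply hx
        simp [h0', Real.zero_rpow hp.ne']
      obtain ⟨w, hwA, hwx⟩ := h2 x hx0
      have hne : η' w ≠ 0 := by rw [← h1 w hwA, hwx]; exact hx0
      refine ⟨⟨w, ?_⟩, hwx⟩
      exact Function.mem_support.mpr
        (ne_of_gt (Real.rpow_pos_of_pos (norm_pos_iff.mpr hne) _))
    · rintro ⟨w, hw⟩
      have hw0 : η' w ≠ 0 := by
        intro h0'
        apply hw
        simp [h0', Real.zero_rpow hp.ne']
      simp only
      rw [h1 w (h0 w hw0)]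
  have e1 := lp.norm_rpow_eq_tsum (p := 2) hp η
  have e2 := lp.norm_rpow_eq_tsum (p := 2) hp η'
  have : ‖η‖ ^ (2 : ℝ≥0∞).toReal = ‖η'‖ ^ (2 : ℝ≥0∞).toReal := by
    rw [e1, e2, key]
  have h2' : (2 : ℝ≥0∞).toReal = 2 := by norm_num
  rw [h2'] at this
  rw [Real.rpow_two, Real.rpow_two] at this
  nlinarith [norm_nonneg η, norm_nonneg η', this]

end Aux

/-- a vector supported in a ball of a metric cover pushes down with the same
norm, and the lifted operator acts on it with the same norm as the original operator. -/
theorem lift_vector_norms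
    (H₀ : Type) [NormedAddCommGroup H₀] [InnerProductSpace ℂ H₀] [CompleteSpace H₀]
    [TopologicalSpace.SeparableSpace H₀] (hinf : ¬ FiniteDimensional ℂ H₀)
    (X' X : Type) [MetricSpace X'] [MetricSpace X]
    (hud' : ∃ δ : ℝ, 0 < δ ∧ ∀ u v : X', u ≠ v → δ ≤ dist u v)
    (hud : ∃ δ : ℝ, 0 < δ ∧ ∀ x y : X, x ≠ y → δ ≤ dist x y)
    (π : X' → X) (K R S : ℝ) (hR : 0 < R) (hS : 0 < S)
    (hcover : IsMetricCover (fun u v : X' => dist u v) (fun x y : X => dist x y) π K)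
    (hK : S + R + 1 ≤ K)
    (T : L2 X H₀ →L[ℂ] L2 X H₀)
    (hT : Roe.PropagationLE (fun x y : X => dist x y) T R)
    (T' : L2 X' H₀ →L[ℂ] L2 X' H₀)
    (hT' : IsLift π (fun u v : X' => dist u v) T R T')
    (u : X') (ξ' : L2 X' H₀)
    (hsupp : ∀ w : X', ξ' w ≠ 0 → dist w u ≤ S)
    (ξ : L2 X H₀)
    (hξ₁ : ∀ w : X', dist w u ≤ S → ξ (π w) = ξ' w)
    (hξ₂ : ∀ x : X, (∀ w : X', dist w u ≤ S → π w ≠ x) → ξ x = 0) :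
    ‖ξ‖ = ‖ξ'‖ ∧ ‖T ξ‖ = ‖T' ξ'‖ := by
  obtain ⟨hsurj, hloc⟩ := hcover
  obtain ⟨hb, hd⟩ := hloc u
  have hK0 : (0 : ℝ) < K := by linarith
  -- injectivity on the K-ball around u
  have hinjK : Set.InjOn π {w : X' | dist u w < K} := hb.injOn
  -- distance preservation on the K-ball
  have hdist : ∀ w v : X', dist u w < K → dist u v < K →
      dist (π w) (π v) = dist w v := fun w v hw hv => hd w v hw hv
  -- if ξ x ≠ 0 then x comes from the S-ball
  have hξsup : ∀ x : X, ξ x ≠ 0 → ∃ w : X', dist w u ≤ S ∧ π w = x := by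
    intro x hx
    by_contra hcon
    push_neg at hcon
    exact hx (hξ₂ x fun w hw => hcon w hw)
  -- key entry identity
  have hentry : ∀ w v : X', dist w u ≤ S + R → dist v u ≤ S →
      Roe.entry T' w v = Roe.entry T (π w) (π v) := by
    intro w v hw hv
    by_cases hwv : dist w v ≤ R
    · exact (hT' w v).1 hwv
    · push_neg at hwv
      rw [(hT' w v).2 hwv]
      have huw : dist u w < K := by rw [dist_comm]; linarith
      have huv : dist u v < K := by rw [dist_comm]; linarith
      have := hdist w v huw huv
      exact (hT (π w) (π v) (by show R < dist (π w) (π v); rw [this]; exact hwv)).symm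
  -- first claim
  have claim1 : ‖ξ‖ = ‖ξ'‖ := by
    apply norm_transfer π {w : X' | dist w u ≤ S}
    · intro w hw w' hw' h
      exact hinjK (by simp only [Set.mem_setOf_eq] at hw ⊢; rw [dist_comm]; linarith)
        (by simp only [Set.mem_setOf_eq] at hw' ⊢; rw [dist_comm]; linarith) h
    · exact hsupp
    · exact hξ₁
    · intro x hx
      obtain ⟨w, hw, hwx⟩ := hξsup x hx
      exact ⟨w, hw, hwx⟩
  refine ⟨claim1, ?_⟩
  -- second claim
  apply norm_transfer π {w : X' | dist w u ≤ S + R}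
  · intro w hw w' hw' h
    exact hinjK (by simp only [Set.mem_setOf_eq] at hw ⊢; rw [dist_comm]; linarith)
      (by simp only [Set.mem_setOf_eq] at hw' ⊢; rw [dist_comm]; linarith) h
  · -- support of T'ξ' is in the (S+R)-ball
    intro w hw
    by_contra hcon
    simp only [Set.mem_setOf_eq, not_le] at hcon
    apply hw
    have hz : ∀ v : X', Roe.entry T' w v (ξ' v) = 0 := by
      intro v
      by_cases hv : ξ' v = 0
      · rw [hv, map_zero]
      · have hvS := hsupp v hv
        have hwv : R < dist w v := by
          have := dist_triangle w v u
          by_contra hle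
          push_neg at hle
          linarith
        rw [(hT' w v).2 hwv]
        rfl
    have h1 := hasSum_entry_apply T' ξ' w
    have h2 : HasSum (fun v : X' => Roe.entry T' w v (ξ' v)) 0 := by
      have : (fun v : X' => Roe.entry T' w v (ξ' v)) = fun _ => 0 := funext hz
      rw [this]; exact hasSum_zero
    exact h1.unique h2
  · -- values agree on the (S+R)-ball
    intro w hw
    simp only [Set.mem_setOf_eq] at hw
    have h1 := hasSum_entry_apply T ξ (π w)
    have h2 := hasSum_entry_apply T' ξ' w
    have hiff : HasSum (fun y : X => Roe.entry T (π w) y (ξ y)) ((T' ξ') w) := by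
      apply (hasSum_iff_hasSum_of_ne_zero_bij
        (f := fun y : X => Roe.entry T (π w) y (ξ y))
        (fun v : Function.support (fun v : X' => Roe.entry T' w v (ξ' v)) => π v.1)
        ?_ ?_ ?_).mpr h2
      · rintro ⟨v, hv⟩ ⟨v', hv'⟩ h
        have hv0 : ξ' v ≠ 0 := fun h0 => hv (by simp [Function.mem_support, h0])
        have hv0' : ξ' v' ≠ 0 := fun h0 => hv' (by simp [Function.mem_support, h0])
        have hvS := hsupp v hv0
        have hvS' := hsupp v' hv0'
        exact Subtype.ext (hinjK (by simp only [Set.mem_setOf_eq]; rw [dist_comm]; linarith)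
          (by simp only [Set.mem_setOf_eq]; rw [dist_comm]; linarith) h)
      · intro y hy
        have hy0 : ξ y ≠ 0 := by
          intro h0
          apply hy
          simp [Function.mem_support, h0]
        obtain ⟨v, hvS, hvy⟩ := hξsup y hy0
        refine ⟨⟨v, ?_⟩, hvy⟩
        have he : Roe.entry T' w v = Roe.entry T (π w) (π v) :=
          hentry w v hw hvS
        have hξv : ξ' v = ξ y := by rw [← hξ₁ v hvS, hvy]
        intro h0
        apply hy
        simp only [Function.mem_support, ne_eq, not_not] at h0
        rw [he, hξv, hvy] at h0
        simpa [Function.mem_support] using h0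
      · rintro ⟨v, hv⟩
        have hv0 : ξ' v ≠ 0 := fun h0 => hv (by simp [Function.mem_support, h0])
        have hvS := hsupp v hv0
        simp only
        rw [hξ₁ v hvS, ← hentry w v hw hvS]
    exact h1.unique hiff
  · -- support of Tξ is in the image of the (S+R)-ball
    intro x hx
    have h1 := hasSum_entry_apply T ξ x
    have hex : ∃ y : X, Roe.entry T x y (ξ y) ≠ 0 := by
      by_contra hcon
      push_neg at hcon
      apply hx
      have : (fun y : X => Roe.entry T x y (ξ y)) = fun _ => 0 := funext hcon
      rw [this] at h1
      exact h1.unique hasSum_zero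
    obtain ⟨y, hy⟩ := hex
    have hy0 : ξ y ≠ 0 := fun h0 => hy (by rw [h0, map_zero])
    have hxy : dist x y ≤ R := by
      by_contra hle
      push_neg at hle
      exact hy (by rw [hT x y hle]; rfl)
    obtain ⟨v, hvS, hvy⟩ := hξsup y hy0
    have huv : dist u v < K := by rw [dist_comm]; linarith
    have huu : dist u u < K := by simpa using hK0
    have hdx : dist (π u) x < K := by
      have h3 := dist_triangle (π u) (π v) x
      have h4 : dist (π u) (π v) = dist u v := hdist u v huu huv
      have h5 : dist (π v) x ≤ R := by rw [hvy, dist_comm]; exact hxy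
      have h6 : dist u v ≤ S := by rw [dist_comm]; exact hvS
      calc dist (π u) x ≤ dist (π u) (π v) + dist (π v) x := h3
        _ ≤ S + R := by rw [h4]; linarith
        _ < K := by linarith
    obtain ⟨w, hwK, hwx⟩ := hb.surjOn hdx
    refine ⟨w, ?_, hwx⟩
    simp only [Set.mem_setOf_eq] at hwK ⊢
    have : dist (π u) (π w) = dist u w := hdist u w huu hwK
    rw [dist_comm]
    rw [hwx] at this
    have h3 := dist_triangle (π u) x x
    -- dist u w = dist (π u) x ≤ S + R
    have h4 : dist (π u) x ≤ S + R := by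
      have h5 := dist_triangle (π u) (π v) x
      have h6 : dist (π u) (π v) = dist u v := hdist u v huu huv
      have h7 : dist (π v) x ≤ R := by rw [hvy, dist_comm]; exact hxy
      have h8 : dist u v ≤ S := by rw [dist_comm]; exact hvS
      calc dist (π u) x ≤ dist (π u) (π v) + dist (π v) x := h5
        _ ≤ S + R := by rw [h6]; linarith
    linarith [this ▸ h4]

end
end

section
/- Let X be a uniformly discrete metric space with bounded geometry, let X̃ be a uniformly discrete metric space, let R > 0, and let π : X̃ → X be a surjection which is a K-metric cover for some K > 2R + 1. Then for all bounded operators S, T on ℓ²(X,H₀) of propagation at most R and all scalars a, b ∈ ℂ: (a) the lift T̃ of T at scale R defines a bounded operator on ℓ²(X̃,H₀) of propagation at most R; (b) the lift of T* at scale R equals (T̃)*; (c) the lift of aS + bT at scale R equals a·S̃ + b·T̃; (d) the lift of ST at scale 2R equals S̃·T̃; and (e) if a group Γ acts on X̃ by isometries with π∘γ = π for every γ ∈ Γ, then T̃_{γu,γv} = T̃_{u,v} for all γ ∈ Γ and u,v ∈ X̃. -/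
noncomputable section

open scoped ENNReal

section AuxLemmas

namespace Roe

variable {Y H : Type*} [NormedAddCommGroup H] [InnerProductSpace ℂ H]

open scoped ComplexInnerProductSpace

lemma single_eq_single [inst : DecidableEq Y] (y : Y) (v : H) :
    lp.single (E := fun _ : Y => H) 2 y v
      = @lp.single Y (fun _ => H) _ (Classical.decEq Y) 2 y v := by
  apply lp.ext; funext j
  by_cases hj : j = y
  · subst hj
    rw [lp.single_apply_self, @lp.single_apply_self Y (fun _ => H) _ (Classical.decEq Y)]
  · rw [lp.single_apply_ne _ _ _ hj, @lp.single_apply_ne Y (fun _ => H) _ (Classical.decEq Y) _ _ _ _ hj]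

lemma entry_apply' [DecidableEq Y] (T : L2 Y H →L[ℂ] L2 Y H) (x y : Y) (v : H) :
    entry T x y v = T (lp.single 2 y v) x := by
  rw [single_eq_single]; rfl

lemma entry_norm_le (T : L2 Y H →L[ℂ] L2 Y H) (x y : Y) : ‖entry T x y‖ ≤ ‖T‖ :=
  LinearMap.mkContinuous_norm_le _ (norm_nonneg T) _

lemma ext_of_entry {A B : L2 Y H →L[ℂ] L2 Y H}
    (h : ∀ x y : Y, entry A x y = entry B x y) : A = B := by
  classical
  apply ContinuousLinearMap.ext
  intro ξ
  have hs : HasSum (fun i : Y => lp.single 2 i (ξ i)) ξ :=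
    lp.hasSum_single (by norm_num) ξ
  have hA : HasSum (fun i : Y => A (lp.single 2 i (ξ i))) (A ξ) := hs.mapL A
  have hB : HasSum (fun i : Y => B (lp.single 2 i (ξ i))) (B ξ) := hs.mapL B
  have he : (fun i : Y => A (lp.single 2 i (ξ i))) = fun i : Y => B (lp.single 2 i (ξ i)) := by
    funext i
    apply lp.ext; funext x
    have := congrArg (fun f : H →L[ℂ] H => f (ξ i)) (h x i)
    simpa only [entry_apply'] using this
  rw [he] at hA
  exact hA.unique hB

lemma entry_adjoint [CompleteSpace H] (T : L2 Y H →L[ℂ] L2 Y H) (x y : Y) :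
    entry (ContinuousLinearMap.adjoint T) x y = ContinuousLinearMap.adjoint (entry T y x) := by
  classical
  ext v
  apply ext_inner_right ℂ
  intro w
  rw [ContinuousLinearMap.adjoint_inner_left, entry_apply', entry_apply']
  have h1 : ⟪(ContinuousLinearMap.adjoint T) (lp.single 2 y v), lp.single 2 x w⟫
      = ⟪lp.single (E := fun _ : Y => H) 2 y v, T (lp.single 2 x w)⟫ :=
    ContinuousLinearMap.adjoint_inner_left T _ _
  rwa [lp.inner_single_right, lp.inner_single_left] at h1

lemma entry_smul_add (a b : ℂ) (S T : L2 Y H →L[ℂ] L2 Y H) (x y : Y) :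
    entry (a • S + b • T) x y = a • entry S x y + b • entry T x y := by
  classical
  ext v
  simp only [entry_apply', ContinuousLinearMap.add_apply, ContinuousLinearMap.smul_apply,
    ContinuousLinearMap.coe_smul', Pi.smul_apply]
  rw [lp.coeFn_add]
  simp [lp.coeFn_smul]

lemma eq_sum_single_of_propagation [DecidableEq Y] {d : Y → Y → ℝ}
    {T : L2 Y H →L[ℂ] L2 Y H} {R : ℝ} (hT : PropagationLE d T R) (y : Y) (v : H)
    {F : Finset Y} (hF : ∀ z : Y, d z y ≤ R → z ∈ F) :
    T (lp.single 2 y v) = ∑ z ∈ F, lp.single 2 z (entry T z y v) := by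
  apply lp.ext; funext x
  rw [lp.coeFn_sum, Finset.sum_apply]
  by_cases hx : x ∈ F
  · have hsum : ∑ c ∈ F, lp.single (E := fun _ : Y => H) 2 c (entry T c y v) x
        = lp.single (E := fun _ : Y => H) 2 x (entry T x y v) x :=
      Finset.sum_eq_single_of_mem x hx
        (fun b _ hb => by exact lp.single_apply_ne _ _ _ (Ne.symm hb))
    rw [hsum, lp.single_apply_self]
    exact (entry_apply' T x y v).symm
  · have h0 : ∀ b ∈ F, lp.single (E := fun _ : Y => H) 2 b (entry T b y v) x = 0 := by
      intro b hb
      exact lp.single_apply_ne _ _ _ (fun h => hx (h ▸ hb))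
    rw [Finset.sum_eq_zero h0]
    have hd : R < d x y := not_le.1 (fun h => hx (hF x h))
    have := congrArg (fun f : H →L[ℂ] H => f v) (hT x y hd)
    simpa only [entry_apply', ContinuousLinearMap.zero_apply] using this

lemma entry_comp [DecidableEq Y] {d : Y → Y → ℝ}
    {T : L2 Y H →L[ℂ] L2 Y H} {R : ℝ} (hT : PropagationLE d T R)
    (S : L2 Y H →L[ℂ] L2 Y H) (x y : Y)
    {F : Finset Y} (hF : ∀ z : Y, d z y ≤ R → z ∈ F) (v : H) :
    entry (S ∘L T) x y v = ∑ z ∈ F, entry S x z (entry T z y v) := by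
  rw [entry_apply', ContinuousLinearMap.comp_apply,
    eq_sum_single_of_propagation hT y v hF, map_sum, lp.coeFn_sum, Finset.sum_apply]
  exact Finset.sum_congr rfl fun z _ => (entry_apply' S x z _).symm

set_option maxHeartbeats 1000000 in
lemma exists_matrix_operator [DecidableEq Y]
    (A : Y → Y → (H →L[ℂ] H)) (F : Y → Finset Y) (N : ℕ) (M : ℝ) (hM : 0 ≤ M)
    (hA : ∀ u v : Y, ‖A u v‖ ≤ M)
    (hcard : ∀ u : Y, (F u).card ≤ N)
    (hsymm : ∀ u v : Y, u ∈ F v ↔ v ∈ F u) :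
    ∃ T' : L2 Y H →L[ℂ] L2 Y H, ∀ (ξ : L2 Y H) (u : Y),
      T' ξ u = ∑ v ∈ F u, A u v (ξ v) := by
  have hp2 : (2 : ℝ≥0∞).toReal = 2 := by norm_num
  have hrw : ∀ x : ℝ, x ^ (2 : ℝ≥0∞).toReal = x ^ (2 : ℕ) := by
    intro x
    rw [hp2, show (2:ℝ) = ((2:ℕ):ℝ) by norm_num, Real.rpow_natCast]
  have hpt : ∀ (ξ : L2 Y H) (u : Y),
      ‖∑ v ∈ F u, A u v (ξ v)‖ ^ (2:ℕ) ≤ (N : ℝ) * ∑ v ∈ F u, M ^ 2 * ‖ξ v‖ ^ 2 := by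
    intro ξ u
    have h1 : ‖∑ v ∈ F u, A u v (ξ v)‖ ≤ ∑ v ∈ F u, M * ‖ξ v‖ := by
      refine (norm_sum_le _ _).trans (Finset.sum_le_sum fun v _ => ?_)
      exact ((A u v).le_opNorm _).trans
        (mul_le_mul_of_nonneg_right (hA u v) (norm_nonneg _))
    have h2 : ‖∑ v ∈ F u, A u v (ξ v)‖ ^ (2:ℕ) ≤ (∑ v ∈ F u, M * ‖ξ v‖) ^ (2:ℕ) :=
      pow_le_pow_left₀ (norm_nonneg _) h1 2
    refine h2.trans ?_
    calc (∑ v ∈ F u, M * ‖ξ v‖) ^ 2 ≤ ((F u).card : ℝ) * ∑ v ∈ F u, (M * ‖ξ v‖) ^ 2 :=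
          sq_sum_le_card_mul_sum_sq
      _ ≤ (N : ℝ) * ∑ v ∈ F u, M ^ 2 * ‖ξ v‖ ^ 2 := by
          simp only [mul_pow]
          apply mul_le_mul_of_nonneg_right (by exact_mod_cast hcard u)
          positivity
  have hdouble : ∀ (ξ : L2 Y H) (G : Finset Y),
      ∑ u ∈ G, ∑ v ∈ F u, ‖ξ v‖ ^ 2 ≤ (N : ℝ) * ‖ξ‖ ^ 2 := by
    intro ξ G
    have hle : ∀ b : Y, ((G.sigma fun u => F u).filter (fun p => p.2 = b)).card ≤ N := by
      intro b
      refine le_trans (Finset.card_le_card_of_injOn Sigma.fst ?_ ?_) (hcard b)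
      · intro p hp
        simp only [Finset.mem_coe, Finset.mem_filter, Finset.mem_sigma] at hp
        exact (hsymm p.1 b).2 (hp.2 ▸ hp.1.2)
      · intro p hp q hq hpq
        simp only [Finset.coe_filter, Set.mem_setOf_eq, Finset.mem_sigma] at hp hq
        exact Sigma.ext hpq (heq_of_eq (hp.2.trans hq.2.symm))
    calc ∑ u ∈ G, ∑ v ∈ F u, ‖ξ v‖ ^ 2
        = ∑ p ∈ G.sigma fun u => F u, ‖ξ p.2‖ ^ 2 := (Finset.sum_sigma G F (fun p => ‖ξ p.2‖ ^ 2)).symm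
      _ = ∑ b ∈ (G.sigma fun u => F u).image Sigma.snd,
            ((G.sigma fun u => F u).filter (fun p => Sigma.snd p = b)).card • ‖ξ b‖ ^ 2 :=
          Finset.sum_comp (s := G.sigma fun u => F u) (fun v => ‖ξ v‖ ^ 2) Sigma.snd
      _ ≤ ∑ b ∈ (G.sigma fun u => F u).image Sigma.snd, (N : ℝ) * ‖ξ b‖ ^ 2 := by
          refine Finset.sum_le_sum fun b _ => ?_
          rw [nsmul_eq_mul]
          exact mul_le_mul_of_nonneg_right (by exact_mod_cast hle b) (by positivity)
      _ = (N : ℝ) * ∑ b ∈ (G.sigma fun u => F u).image Sigma.snd, ‖ξ b‖ ^ 2 :=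
          (Finset.mul_sum _ _ _).symm
      _ ≤ (N : ℝ) * ‖ξ‖ ^ 2 := by
          refine mul_le_mul_of_nonneg_left ?_ (Nat.cast_nonneg N)
          have := lp.sum_rpow_le_norm_rpow (p := 2) (by rw [hp2]; norm_num) ξ
            ((G.sigma fun u => F u).image Sigma.snd)
          simpa only [hrw] using this
  have hkey : ∀ (ξ : L2 Y H) (G : Finset Y),
      ∑ u ∈ G, ‖∑ v ∈ F u, A u v (ξ v)‖ ^ (2 : ℝ≥0∞).toReal
        ≤ ((N : ℝ) * M * ‖ξ‖) ^ (2 : ℝ≥0∞).toReal := by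
    intro ξ G
    simp only [hrw]
    calc ∑ u ∈ G, ‖∑ v ∈ F u, A u v (ξ v)‖ ^ (2:ℕ)
        ≤ ∑ u ∈ G, (N : ℝ) * ∑ v ∈ F u, M ^ 2 * ‖ξ v‖ ^ 2 :=
          Finset.sum_le_sum fun u _ => hpt ξ u
      _ = (N : ℝ) * M ^ 2 * ∑ u ∈ G, ∑ v ∈ F u, ‖ξ v‖ ^ 2 := by
          simp only [Finset.mul_sum]
          exact Finset.sum_congr rfl fun u _ =>
            Finset.sum_congr rfl fun v _ => by ring
      _ ≤ (N : ℝ) * M ^ 2 * ((N : ℝ) * ‖ξ‖ ^ 2) :=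
          mul_le_mul_of_nonneg_left (hdouble ξ G) (by positivity)
      _ = ((N : ℝ) * M * ‖ξ‖) ^ (2:ℕ) := by ring
  have hmem : ∀ ξ : L2 Y H, Memℓp (fun u => ∑ v ∈ F u, A u v (ξ v)) 2 :=
    fun ξ => memℓp_gen' (hkey ξ)
  let L : L2 Y H →ₗ[ℂ] L2 Y H :=
    { toFun := fun ξ => ⟨fun u => ∑ v ∈ F u, A u v (ξ v), hmem ξ⟩
      map_add' := by
        intro ξ η
        apply lp.ext; funext u
        show ∑ v ∈ F u, A u v ((ξ + η) v)
          = (∑ v ∈ F u, A u v (ξ v)) + ∑ v ∈ F u, A u v (η v)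
        rw [← Finset.sum_add_distrib]
        refine Finset.sum_congr rfl fun v _ => ?_
        rw [lp.coeFn_add, Pi.add_apply, map_add]
      map_smul' := by
        intro c ξ
        apply lp.ext; funext u
        show ∑ v ∈ F u, A u v ((c • ξ) v) = c • ∑ v ∈ F u, A u v (ξ v)
        rw [Finset.smul_sum]
        refine Finset.sum_congr rfl fun v _ => ?_
        rw [lp.coeFn_smul, Pi.smul_apply, map_smul] }
  refine ⟨L.mkContinuous ((N : ℝ) * M) (fun ξ => ?_), fun ξ u => rfl⟩
  apply lp.norm_le_of_forall_sum_le (by rw [hp2]; norm_num)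
    (by positivity)
  intro G
  have := hkey ξ G
  calc ∑ u ∈ G, ‖(L ξ) u‖ ^ (2 : ℝ≥0∞).toReal
      = ∑ u ∈ G, ‖∑ v ∈ F u, A u v (ξ v)‖ ^ (2 : ℝ≥0∞).toReal := rfl
    _ ≤ ((N : ℝ) * M * ‖ξ‖) ^ (2 : ℝ≥0∞).toReal := hkey ξ G
end Roe
end AuxLemmas

/-- basic algebraic properties of lifting operators along a metric cover. -/
theorem lift_star_algebra_properties
    (H₀ : Type) [NormedAddCommGroup H₀] [InnerProductSpace ℂ H₀] [CompleteSpace H₀]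
    [TopologicalSpace.SeparableSpace H₀] (hinf : ¬ FiniteDimensional ℂ H₀)
    (X' X : Type) [MetricSpace X'] [MetricSpace X]
    (hud' : ∃ δ : ℝ, 0 < δ ∧ ∀ u v : X', u ≠ v → δ ≤ dist u v)
    (hud : ∃ δ : ℝ, 0 < δ ∧ ∀ x y : X, x ≠ y → δ ≤ dist x y)
    (hbg : ∀ r : ℝ, ∃ N : ℕ, ∀ x : X, (Metric.ball x r).Finite ∧ (Metric.ball x r).ncard ≤ N)
    (π : X' → X) (K R : ℝ) (hR : 0 < R)
    (hcover : IsMetricCover (fun u v : X' => dist u v) (fun x y : X => dist x y) π K)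
    (hK : 2 * R + 1 < K)
    (S T : L2 X H₀ →L[ℂ] L2 X H₀)
    (hS : Roe.PropagationLE (fun x y : X => dist x y) S R)
    (hT : Roe.PropagationLE (fun x y : X => dist x y) T R)
    (a b : ℂ) :
    -- (a) the lift of `T` at scale `R` exists as a bounded operator, of propagation ≤ R
    (∃ T' : L2 X' H₀ →L[ℂ] L2 X' H₀, IsLift π (fun u v : X' => dist u v) T R T' ∧
        Roe.PropagationLE (fun u v : X' => dist u v) T' R) ∧
    -- (b) the lift of the adjoint is the adjoint of the lift
    (∀ T' T'' : L2 X' H₀ →L[ℂ] L2 X' H₀,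
      IsLift π (fun u v : X' => dist u v) T R T' →
      IsLift π (fun u v : X' => dist u v) (ContinuousLinearMap.adjoint T) R T'' →
      T'' = ContinuousLinearMap.adjoint T') ∧
    -- (c) lifting is linear
    (∀ S' T' C' : L2 X' H₀ →L[ℂ] L2 X' H₀,
      IsLift π (fun u v : X' => dist u v) S R S' →
      IsLift π (fun u v : X' => dist u v) T R T' →
      IsLift π (fun u v : X' => dist u v) (a • S + b • T) R C' →
      C' = a • S' + b • T') ∧
    -- (d) the lift of the product at scale 2R is the product of the lifts
    (∀ S' T' C' : L2 X' H₀ →L[ℂ] L2 X' H₀,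
      IsLift π (fun u v : X' => dist u v) S R S' →
      IsLift π (fun u v : X' => dist u v) T R T' →
      IsLift π (fun u v : X' => dist u v) (S ∘L T) (2 * R) C' →
      C' = S' ∘L T') ∧
    -- (e) lifts are invariant under isometries of `X'` commuting with `π`
    (∀ (Γ : Type) (_ : Group Γ) (_ : MulAction Γ X'),
      (∀ (γ : Γ) (u v : X'), dist (γ • u) (γ • v) = dist u v) →
      (∀ (γ : Γ) (u : X'), π (γ • u) = π u) →
      ∀ T' : L2 X' H₀ →L[ℂ] L2 X' H₀,
        IsLift π (fun u v : X' => dist u v) T R T' →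
        ∀ (γ : Γ) (u v : X'), Roe.entry T' (γ • u) (γ • v) = Roe.entry T' u v) := by
  classical
  obtain ⟨hsurj, hcov⟩ := hcover
  have hK0 : (0:ℝ) < K := by linarith
  have hπdist : ∀ u w w' : X', dist u w < K → dist u w' < K →
      dist (π w) (π w') = dist w w' := fun u w w' h h' => (hcov u).2 w w' h h'
  have hπd : ∀ u v : X', dist u v < K → dist (π u) (π v) = dist u v := by
    intro u v h
    exact hπdist u u v (by simpa using hK0) h
  obtain ⟨N, hN⟩ := hbg (R + 1)
  have hFfin : ∀ u : X', {v : X' | dist u v ≤ R}.Finite := by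
    intro u
    have hRK : R < K := by linarith
    have hsub : {v : X' | dist u v ≤ R} ⊆ {w : X' | dist u w < K} := by
      intro v hv
      have hv2 : dist u v ≤ R := hv
      show dist u v < K
      linarith
    refine Set.Finite.of_finite_image ((hN (π u)).1.subset ?_) ((hcov u).1.injOn.mono hsub)
    rintro x ⟨v, hv, rfl⟩
    have hv' : dist u v ≤ R := hv
    rw [Metric.mem_ball, dist_comm, hπd u v (hsub hv)]
    linarith
  set F : X' → Finset X' := fun u => (hFfin u).toFinset with hFdef
  have hFmem : ∀ u v : X', v ∈ F u ↔ dist u v ≤ R := by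
    intro u v
    simp [hFdef, Set.Finite.mem_toFinset]
  have hcard : ∀ u : X', (F u).card ≤ N := by
    intro u
    have hinj : Set.InjOn π (F u : Set X') := by
      apply (hcov u).1.injOn.mono
      intro v hv
      have hv2 : dist u v ≤ R := (hFmem u v).1 hv
      exact lt_of_le_of_lt hv2 (by linarith)
    calc (F u).card = ((F u).image π).card := (Finset.card_image_of_injOn hinj).symm
      _ ≤ ((hN (π u)).1.toFinset).card := by
          apply Finset.card_le_card
          intro x hx
          obtain ⟨v, hv, rfl⟩ := Finset.mem_image.1 hx
          have hdR : dist u v ≤ R := (hFmem u v).1 hv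
          rw [Set.Finite.mem_toFinset, Metric.mem_ball, dist_comm, hπd u v (by linarith)]
          linarith
      _ ≤ N := by
          have h2 := (hN (π u)).2
          rwa [Set.ncard_eq_toFinset_card _ (hN (π u)).1] at h2
  have hsymm : ∀ u v : X', u ∈ F v ↔ v ∈ F u := by
    intro u v
    rw [hFmem, hFmem, dist_comm]
  obtain ⟨T0, hT0⟩ := Roe.exists_matrix_operator (fun u v => Roe.entry T (π u) (π v)) F N ‖T‖
    (norm_nonneg T) (fun u v => Roe.entry_norm_le T _ _) hcard hsymm
  have hET0 : ∀ u v : X', Roe.entry T0 u v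
      = if dist u v ≤ R then Roe.entry T (π u) (π v) else 0 := by
    intro u v
    ext w
    rw [Roe.entry_apply', hT0 (lp.single 2 v w) u]
    by_cases hd : dist u v ≤ R
    · rw [if_pos hd]
      have hv : v ∈ F u := (hFmem u v).2 hd
      have hsum : ∑ v' ∈ F u,
            Roe.entry T (π u) (π v') (lp.single (E := fun _ : X' => H₀) 2 v w v')
          = Roe.entry T (π u) (π v) (lp.single (E := fun _ : X' => H₀) 2 v w v) :=
        Finset.sum_eq_single_of_mem v hv (fun b _ hb => by
          rw [lp.single_apply_ne _ _ _ hb, map_zero])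
      rw [hsum, lp.single_apply_self]
    · rw [if_neg hd]
      have h0 : ∀ b ∈ F u,
          Roe.entry T (π u) (π b) (lp.single (E := fun _ : X' => H₀) 2 v w b) = 0 := by
        intro b hb
        have hbv : b ≠ v := fun h => hd (h ▸ (hFmem u b).1 hb)
        rw [lp.single_apply_ne _ _ _ hbv, map_zero]
      rw [Finset.sum_eq_zero h0, ContinuousLinearMap.zero_apply]
  have hlift0 : IsLift π (fun u v : X' => dist u v) T R T0 := by
    intro u v
    exact ⟨fun hd => by rw [hET0, if_pos hd], fun hd => by rw [hET0, if_neg (not_le.2 hd)]⟩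
  have hprop0 : Roe.PropagationLE (fun u v : X' => dist u v) T0 R :=
    fun u v hd => (hlift0 u v).2 hd
  refine ⟨⟨T0, hlift0, hprop0⟩, ?_, ?_, ?_, ?_⟩
  -- (b)
  · intro T' T'' h1 h2
    apply Roe.ext_of_entry
    intro u v
    rw [Roe.entry_adjoint]
    by_cases hd : dist u v ≤ R
    · rw [(h2 u v).1 hd, Roe.entry_adjoint, (h1 v u).1 (by show dist v u ≤ R; rw [dist_comm]; exact hd)]
    · rw [(h2 u v).2 (not_le.1 hd), (h1 v u).2 (by show R < dist v u; rw [dist_comm]; exact not_le.1 hd)]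
      simp
  -- (c)
  · intro S' T' C' hS' hT' hC'
    apply Roe.ext_of_entry
    intro u v
    rw [Roe.entry_smul_add]
    by_cases hd : dist u v ≤ R
    · rw [(hC' u v).1 hd, Roe.entry_smul_add, (hS' u v).1 hd, (hT' u v).1 hd]
    · rw [(hC' u v).2 (not_le.1 hd), (hS' u v).2 (not_le.1 hd), (hT' u v).2 (not_le.1 hd)]
      simp
  -- (d)
  · intro S' T' C' hS' hT' hC'
    have hLT : Roe.PropagationLE (fun u v : X' => dist u v) T' R := fun p q h => (hT' p q).2 h
    have hGfin : ∀ x : X, {z : X | dist x z ≤ R}.Finite := by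
      intro x
      apply (hN x).1.subset
      intro z hz
      rw [Metric.mem_ball, dist_comm]
      exact lt_of_le_of_lt hz (by linarith)
    apply Roe.ext_of_entry
    intro u v
    ext w
    rw [Roe.entry_comp (d := fun u v : X' => dist u v) hLT S' u v
      (F := F v) (fun z hz => (hFmem v z).2 (by rw [dist_comm]; exact hz)) w]
    by_cases h2R : dist u v ≤ 2 * R
    · rw [(hC' u v).1 h2R,
        Roe.entry_comp (d := fun x y : X => dist x y) hT S (π u) (π v)
          (F := (hGfin (π v)).toFinset)
          (fun z hz => (Set.Finite.mem_toFinset _).2 (by have hz2 : dist z (π v) ≤ R := hz; show dist (π v) z ≤ R; rw [dist_comm]; exact hz2)) w]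
      refine (Finset.sum_bij (fun (z' : X') (_ : z' ∈ F v) => π z') ?_ ?_ ?_ ?_).symm
      · intro z' hz'
        have hd : dist v z' ≤ R := (hFmem v z').1 hz'
        rw [Set.Finite.mem_toFinset]
        show dist (π v) (π z') ≤ R
        rw [hπd v z' (by linarith)]
        exact hd
      · intro z1 h1 z2 h2 heq
        have hd1 : dist v z1 < K := lt_of_le_of_lt ((hFmem v z1).1 h1) (by linarith)
        have hd2 : dist v z2 < K := lt_of_le_of_lt ((hFmem v z2).1 h2) (by linarith)
        exact (hcov v).1.injOn hd1 hd2 heq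
      · intro z hz
        rw [Set.Finite.mem_toFinset] at hz
        have hz2 : dist (π v) z ≤ R := hz
        have hzK : z ∈ {x : X | dist (π v) x < K} := lt_of_le_of_lt hz2 (by linarith)
        obtain ⟨z', hz', rfl⟩ := (hcov v).1.surjOn hzK
        refine ⟨z', (hFmem v z').2 ?_, rfl⟩
        rw [← hπd v z' hz']
        exact hz2
      · intro z' hz'
        have hdz : dist v z' ≤ R := (hFmem v z').1 hz'
        have hTz : Roe.entry T' z' v = Roe.entry T (π z') (π v) :=
          (hT' z' v).1 (by show dist z' v ≤ R; rw [dist_comm]; exact hdz)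
        have hvuK : dist v u < K := by
          rw [dist_comm]
          exact lt_of_le_of_lt h2R (by linarith)
        have hdu : dist (π u) (π z') = dist u z' :=
          hπdist v u z' hvuK (lt_of_le_of_lt hdz (by linarith))
        by_cases hS9 : dist u z' ≤ R
        · rw [hTz, (hS' u z').1 hS9]
        · have h0' : Roe.entry S' u z' = 0 := (hS' u z').2 (not_le.1 hS9)
          have h0 : Roe.entry S (π u) (π z') = 0 :=
            hS (π u) (π z') (by show R < dist (π u) (π z'); rw [hdu]; exact not_le.1 hS9)
          rw [hTz, h0', h0]
    · rw [(hC' u v).2 (not_le.1 h2R), ContinuousLinearMap.zero_apply]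
      symm
      apply Finset.sum_eq_zero
      intro z' hz'
      have hdz : dist v z' ≤ R := (hFmem v z').1 hz'
      have hR' : R < dist u z' := by
        have htri : dist u v ≤ dist u z' + dist z' v := dist_triangle u z' v
        rw [dist_comm z' v] at htri
        have h2R' : 2 * R < dist u v := not_le.1 h2R
        linarith
      rw [(hS' u z').2 hR', ContinuousLinearMap.zero_apply]
  -- (e)
  · intro Γ _ _ hiso hcomm T' hT' γ u v
    by_cases hd : dist u v ≤ R
    · rw [(hT' (γ • u) (γ • v)).1 (by show dist (γ • u) (γ • v) ≤ R; rw [hiso]; exact hd), (hT' u v).1 hd, hcomm, hcomm]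
    · rw [(hT' (γ • u) (γ • v)).2 (by show R < dist (γ • u) (γ • v); rw [hiso]; exact not_le.1 hd), (hT' u v).2 (not_le.1 hd)]

end
end

section
/- Let T_∞ be the graph whose vertex set consists of all finite sequences of natural numbers, two sequences being adjacent exactly when one is obtained from the other by appending a single term (so T_∞ is a tree in which every vertex has countably infinite degree). Then for every connected acyclic simple graph T with countably many vertices there exists an injective map f : V(T) → V(T_∞) such that d_{T_∞}(f(u),f(v)) = d_T(u,v) for all u,v ∈ V(T); that is, every countable tree embeds isometrically into T_∞. -/
noncomputable section

open scoped ENNReal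

/-- The tree `T_∞` whose vertices are the finite sequences of natural numbers, two sequences
being adjacent exactly when one is obtained from the other by appending a single term. -/
def Tinfty : SimpleGraph (List ℕ) where
  Adj a b := (∃ n : ℕ, b = a ++ [n]) ∨ (∃ n : ℕ, a = b ++ [n])
  symm := by
    constructor
    intro a b h
    rcases h with h | h
    · exact Or.inr h
    · exact Or.inl h
  loopless := by
    constructor
    intro a h
    rcases h with ⟨n, h⟩ | ⟨n, h⟩ <;>
    · have := congrArg List.length h
      simp at this

namespace TinftyAux

def lcp : List ℕ → List ℕ → ℕ
  | a :: as, b :: bs => if a = b then lcp as bs + 1 else 0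
  | _, _ => 0

lemma lcp_nil_left (b : List ℕ) : lcp [] b = 0 := by cases b <;> rfl

lemma lcp_le_left : ∀ a b : List ℕ, lcp a b ≤ a.length
  | [], b => by simp [lcp_nil_left]
  | _ :: _, [] => by simp [lcp]
  | a :: as, b :: bs => by
    simp only [lcp, List.length_cons]
    split
    · simpa using lcp_le_left as bs
    · simp

lemma lcp_le_right : ∀ a b : List ℕ, lcp a b ≤ b.length
  | [], b => by simp [lcp_nil_left]
  | _ :: _, [] => by simp [lcp]
  | a :: as, b :: bs => by
    simp only [lcp, List.length_cons]
    split
    · simpa using lcp_le_right as bs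
    · simp

lemma take_lcp : ∀ a b : List ℕ, a.take (lcp a b) = b.take (lcp a b)
  | [], b => by simp [lcp_nil_left]
  | _ :: _, [] => by simp [lcp]
  | a :: as, b :: bs => by
    simp only [lcp]
    split
    · next h => simp [List.take_succ_cons, h, take_lcp as bs]
    · simp

lemma le_lcp : ∀ (a b : List ℕ) (k : ℕ), k ≤ a.length → k ≤ b.length →
    a.take k = b.take k → k ≤ lcp a b
  | _, _, 0, _, _, _ => Nat.zero_le _
  | [], _, k + 1, h, _, _ => by simp at h
  | _ :: _, [], k + 1, _, h, _ => by simp at h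
  | a :: as, b :: bs, k + 1, h1, h2, h3 => by
    simp only [List.take_succ_cons] at h3
    injection h3 with hab ht
    simp only [lcp, hab, if_pos rfl]
    exact Nat.succ_le_succ (le_lcp as bs k (by simpa using h1) (by simpa using h2) ht)

lemma lcp_self (a : List ℕ) : lcp a a = a.length :=
  le_antisymm (lcp_le_left _ _) (le_lcp a a _ le_rfl le_rfl rfl)

lemma lcp_append_ge (a b : List ℕ) (n : ℕ) : lcp a b ≤ lcp (a ++ [n]) b := by
  apply le_lcp
  · simpa using le_trans (lcp_le_left a b) (by omega)
  · exact lcp_le_right a b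
  · rw [List.take_append_of_le_length (lcp_le_left a b)]
    exact take_lcp a b

lemma lcp_append_le (a b : List ℕ) (n : ℕ) : lcp (a ++ [n]) b ≤ lcp a b + 1 := by
  set k := lcp (a ++ [n]) b with hk
  have hk1 : k ≤ a.length + 1 := by simpa using lcp_le_left (a ++ [n]) b
  have hk2 : k ≤ b.length := lcp_le_right _ _
  by_cases h : k ≤ a.length
  · have : k ≤ lcp a b := by
      apply le_lcp a b k h hk2
      rw [← List.take_append_of_le_length h (l₂ := [n])]
      exact take_lcp _ b
    omega
  · have ht := take_lcp (a ++ [n]) b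
    have h2 : a = List.take a.length b := by
      have := congrArg (List.take a.length) ht
      rwa [List.take_take, List.take_take, Nat.min_eq_left (by omega),
        List.take_append_of_le_length le_rfl, List.take_length] at this
    have : a.length ≤ lcp a b := le_lcp a b a.length le_rfl (by omega)
      (by rw [List.take_length]; exact h2)
    omega

/-- distance formula candidate -/
def tdist (a b : List ℕ) : ℕ := (a.length - lcp a b) + (b.length - lcp a b)

lemma tdist_adj_le {a a' b : List ℕ} (h : Tinfty.Adj a a') : tdist a b ≤ tdist a' b + 1 := by
  have h1a := lcp_le_left a b
  have h1b := lcp_le_right a b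
  have h2a := lcp_le_left a' b
  have h2b := lcp_le_right a' b
  rcases h with ⟨n, rfl⟩ | ⟨n, rfl⟩
  · have g1 := lcp_append_ge a b n
    have g2 := lcp_append_le a b n
    simp only [tdist, List.length_append, List.length_cons, List.length_nil] at *
    omega
  · have g1 := lcp_append_ge a' b n
    have g2 := lcp_append_le a' b n
    simp only [tdist, List.length_append, List.length_cons, List.length_nil] at *
    omega

lemma tdist_le_length {a b : List ℕ} (w : Tinfty.Walk a b) : tdist a b ≤ w.length := by
  induction w with
  | nil => simp [tdist, lcp_self]
  | @cons x y z h p ih =>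
    have := tdist_adj_le (b := z) h
    simp only [SimpleGraph.Walk.length_cons]
    omega

lemma walk_take : ∀ (n L : ℕ) (a : List ℕ), L + n = a.length →
    ∃ w : Tinfty.Walk (a.take L) a, w.length = n := by
  intro n
  induction n with
  | zero =>
    intro L a h
    have ht : a.take L = a := List.take_of_length_le (by omega)
    exact ⟨SimpleGraph.Walk.nil.copy ht.symm rfl, by simp⟩
  | succ n ih =>
    intro L a h
    have hL : L < a.length := by omega
    have hadj : Tinfty.Adj (a.take L) (a.take (L + 1)) := by
      left
      exact ⟨a[L], by rw [List.take_succ]; simp [List.getElem?_eq_getElem hL]⟩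
    obtain ⟨w, hw⟩ := ih (L + 1) a (by omega)
    exact ⟨SimpleGraph.Walk.cons hadj w, by simp [hw]⟩

lemma tinfty_dist (a b : List ℕ) : Tinfty.dist a b = tdist a b := by
  obtain ⟨w1, hw1⟩ := walk_take (a.length - lcp a b) (lcp a b) a
    (by have := lcp_le_left a b; omega)
  obtain ⟨w2, hw2⟩ := walk_take (b.length - lcp a b) (lcp a b) b
    (by have := lcp_le_right a b; omega)
  let w2' : Tinfty.Walk (a.take (lcp a b)) b := w2.copy (take_lcp a b).symm rfl
  let w : Tinfty.Walk a b := w1.reverse.append w2'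
  have hwl : w.length = tdist a b := by
    simp [w, w2', hw1, hw2, tdist]
  refine le_antisymm ?_ ?_
  · rw [← hwl]; exact SimpleGraph.dist_le w
  · obtain ⟨p, hp⟩ := w.reachable.exists_walk_length_eq_dist
    rw [← hp]; exact tdist_le_length p

lemma dist_get_le {V : Type*} {G : SimpleGraph V} {a b : V} (w : G.Walk a b) :
    ∀ (i : ℕ) (hi : i < w.support.length), G.dist (w.support[i]) b ≤ w.length - i := by
  induction w with
  | nil =>
    intro i hi
    simp only [SimpleGraph.Walk.support_nil, List.length_singleton] at hi
    have : i = 0 := by omega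
    subst this
    simp
  | @cons u x b h p ih =>
    intro i hi
    cases i with
    | zero => simpa using SimpleGraph.dist_le (SimpleGraph.Walk.cons h p)
    | succ i =>
      have hi' : i < p.support.length := by
        simpa [SimpleGraph.Walk.support_cons] using hi
      have := ih i hi'
      simpa [SimpleGraph.Walk.support_cons] using this

end TinftyAux

open TinftyAux

/-- every countable tree embeds isometrically into `T_∞`. -/
theorem countable_tree_isometrically_embeds_in_Tinfty
    (V : Type) [Countable V] (T : SimpleGraph V) (hT : T.IsTree) :
    ∃ f : V → List ℕ, Function.Injective f ∧
      ∀ u v : V, Tinfty.dist (f u) (f v) = T.dist u v := by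
  classical
  obtain ⟨e, he⟩ := Countable.exists_injective_nat V
  have hc := hT.isConnected
  obtain ⟨r⟩ := hc.nonempty
  choose P hP using fun v => hc.exists_walk_length_eq_dist r v
  have hpath : ∀ v, (P v).IsPath := fun v => (P v).isPath_of_length_eq_dist (hP v)
  have huniq : ∀ (v : V) (q : T.Walk r v), q.IsPath → q = P v := by
    intro v q hq
    exact Subtype.ext_iff.mp (hT.IsAcyclic.path_unique ⟨q, hq⟩ ⟨P v, hpath v⟩)
  set f : V → List ℕ := fun v => ((P v).support.tail).map e with hf
  have hflen : ∀ v, (f v).length = (P v).length := by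
    intro v
    simp only [hf, List.length_map, List.length_tail, SimpleGraph.Walk.length_support]
    omega
  -- key structural lemma
  have key : ∀ u v (h : T.Adj u v), v ∉ (P u).support →
      (P v).support = (P u).support ++ [v] := by
    intro u v h hv
    have hW : ((P u).concat h).IsPath := by
      rw [SimpleGraph.Walk.isPath_def, SimpleGraph.Walk.support_concat]
      simp [List.nodup_append', (hpath u).support_nodup, hv]
    have := huniq v _ hW
    rw [← this, SimpleGraph.Walk.support_concat]
  have hadj : ∀ u v, T.Adj u v →
      (P v).support = (P u).support ++ [v] ∨ (P u).support = (P v).support ++ [u] := by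
    intro u v h
    by_cases hv : v ∈ (P u).support
    · right
      apply key v u h.symm
      have htu : (P u).takeUntil v hv = P v := huniq v _ ((hpath u).takeUntil hv)
      rw [← htu]
      intro hu
      have hspec := SimpleGraph.Walk.take_spec (P u) hv
      have hnd := (hpath u).support_nodup
      rw [← hspec, SimpleGraph.Walk.support_append] at hnd
      have hu2 : u ∈ ((P u).dropUntil v hv).support.tail := by
        have hend := SimpleGraph.Walk.end_mem_support ((P u).dropUntil v hv)
        rw [SimpleGraph.Walk.support_eq_cons] at hend
        rcases List.mem_cons.mp hend with h1 | h1
        · exact absurd h1 h.ne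
        · exact h1
      exact ((List.nodup_append'.mp hnd).2.2) hu hu2
    · left; exact key u v h hv
  have hom : ∀ u v, T.Adj u v → Tinfty.Adj (f u) (f v) := by
    intro u v h
    rcases hadj u v h with h1 | h1
    · left
      refine ⟨e v, ?_⟩
      simp only [hf]
      rw [h1, SimpleGraph.Walk.support_eq_cons (P u)]
      simp
    · right
      refine ⟨e u, ?_⟩
      simp only [hf]
      rw [h1, SimpleGraph.Walk.support_eq_cons (P v)]
      simp
  let φ : T →g Tinfty := ⟨f, fun {a b} h => hom a b h⟩
  have main : ∀ u v : V, Tinfty.dist (f u) (f v) = T.dist u v := by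
    intro u v
    -- upper bound
    obtain ⟨w, hw⟩ := hc.exists_walk_length_eq_dist u v
    have upper : Tinfty.dist (f u) (f v) ≤ T.dist u v := by
      rw [← hw, ← SimpleGraph.Walk.length_map (f := φ) (p := w)]
      exact SimpleGraph.dist_le _
    -- lower bound
    set L := lcp (f u) (f v) with hL
    have hLu : L ≤ (f u).length := lcp_le_left _ _
    have hLv : L ≤ (f v).length := lcp_le_right _ _
    have ht' : (P u).support.tail.take L = (P v).support.tail.take L := by
      apply List.map_injective_iff.mpr he
      have := take_lcp (f u) (f v)
      simpa only [hf, List.map_take] using this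
    have hLlt_u : L < (P u).support.length := by
      rw [SimpleGraph.Walk.length_support]
      have := hflen u; omega
    have hLlt_v : L < (P v).support.length := by
      rw [SimpleGraph.Walk.length_support]
      have := hflen v; omega
    have hsupp_take : (P u).support.take (L + 1) = (P v).support.take (L + 1) := by
      conv_lhs => rw [SimpleGraph.Walk.support_eq_cons]
      conv_rhs => rw [SimpleGraph.Walk.support_eq_cons]
      rw [List.take_succ_cons, List.take_succ_cons, ht']
    have hc' : (P u).support[L]'hLlt_u = (P v).support[L]'hLlt_v := by
      rw [List.getElem_take' hLlt_u (Nat.lt_succ_self L),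
        List.getElem_take' hLlt_v (Nat.lt_succ_self L)]
      simp_rw [hsupp_take]
    set c := (P u).support[L]'hLlt_u with hcdef
    have d1 : T.dist c u ≤ (P u).length - L := dist_get_le (P u) L hLlt_u
    have d2 : T.dist c v ≤ (P v).length - L := by
      rw [hc']
      exact dist_get_le (P v) L hLlt_v
    have tri : T.dist u v ≤ T.dist u c + T.dist c v := hc.dist_triangle
    rw [SimpleGraph.dist_comm (u := u) (v := c)] at tri
    have hform : Tinfty.dist (f u) (f v) = ((f u).length - L) + ((f v).length - L) := by
      rw [tinfty_dist]; rfl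
    have h1 := hflen u
    have h2 := hflen v
    omega
  refine ⟨f, ?_, main⟩
  intro u v huv
  have h0 : T.dist u v = 0 := by
    rw [← main u v, huv, SimpleGraph.dist_self]
  exact (hc.dist_eq_zero_iff).mp h0

end
end
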